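/- arXiv:1407.1067 — 7 statements merged into one kernel-verified Lean document; each statement's English description precedes it below -/
import Mathlib

section
/- Let A and B be positive semidefinite d×d complex matrices and let α ∈ (0,1). Then Tr((A+B)^α) ≤ Tr(A^α) + Tr(B^α). -/
open scoped BigOperators ComplexOrder

/-- Power of a Hermitian matrix taken on its support: eigenvalue 0 maps to 0,
eigenvalue x > 0 maps to x ^ α. Junk value 0 for non-Hermitian matrices. -/
noncomputable def mPow {d : ℕ} (A : Matrix (Fin d) (Fin d) ℂ) (α : ℝ) :
    Matrix (Fin d) (Fin d) ℂ :=
  if hA : A.IsHermitian then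
    (hA.eigenvectorUnitary : Matrix (Fin d) (Fin d) ℂ) *
      Matrix.diagonal (fun i =>
        (((if hA.eigenvalues i = 0 then 0 else hA.eigenvalues i ^ α) : ℝ) : ℂ)) *
      star (hA.eigenvectorUnitary : Matrix (Fin d) (Fin d) ℂ)
  else 0

/-- Logarithm of a Hermitian matrix taken on its support (0 maps to 0). -/
noncomputable def mLog {d : ℕ} (A : Matrix (Fin d) (Fin d) ℂ) :
    Matrix (Fin d) (Fin d) ℂ :=
  if hA : A.IsHermitian then
    (hA.eigenvectorUnitary : Matrix (Fin d) (Fin d) ℂ) *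
      Matrix.diagonal (fun i => ((Real.log (hA.eigenvalues i) : ℝ) : ℂ)) *
      star (hA.eigenvectorUnitary : Matrix (Fin d) (Fin d) ℂ)
  else 0

/-- supp A ⊆ supp B : the range of A is contained in the range of B. -/
def suppLe {d : ℕ} (A B : Matrix (Fin d) (Fin d) ℂ) : Prop :=
  LinearMap.range (Matrix.toLin' A) ≤ LinearMap.range (Matrix.toLin' B)


open Matrix MeasureTheory Set

namespace TrSub

variable {d : ℕ}

/-- trace of U * diagonal v * star U  = sum v, for unitary U -/
lemma trace_unitary_conj (U : Matrix.unitaryGroup (Fin d) ℂ) (v : Fin d → ℂ) :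
    ((U : Matrix (Fin d) (Fin d) ℂ) * Matrix.diagonal v * star (U : Matrix (Fin d) (Fin d) ℂ)).trace
      = ∑ i, v i := by
  rw [Matrix.trace_mul_cycle, Matrix.UnitaryGroup.star_mul_self U, Matrix.one_mul, Matrix.trace_diagonal]

/-- trace of diagonal * M -/
lemma trace_diagonal_mul (v : Fin d → ℂ) (M : Matrix (Fin d) (Fin d) ℂ) :
    (Matrix.diagonal v * M).trace = ∑ i, v i * M i i := by
  simp [Matrix.trace, Matrix.diag, Matrix.mul_apply, Matrix.diagonal]


/-- quadratic form of `P` at the `i`-th eigenvector of `X` -/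
noncomputable def q {X : Matrix (Fin d) (Fin d) ℂ} (hX : X.IsHermitian)
    (P : Matrix (Fin d) (Fin d) ℂ) (i : Fin d) : ℂ :=
  dotProduct (star (⇑(hX.eigenvectorBasis i))) (P *ᵥ ⇑(hX.eigenvectorBasis i))

lemma conj_diag (U P : Matrix (Fin d) (Fin d) ℂ) (i : Fin d) :
    (star U * P * U) i i
      = dotProduct (star (fun j => U j i)) (P *ᵥ (fun j => U j i)) := by
  simp only [Matrix.mul_apply, Matrix.star_apply, dotProduct, Matrix.mulVec,
    dotProduct, Pi.star_apply, Finset.sum_mul, Finset.mul_sum]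
  rw [Finset.sum_comm]
  refine Finset.sum_congr rfl fun j _ => Finset.sum_congr rfl fun k _ => by ring

lemma trace_mul_q {X : Matrix (Fin d) (Fin d) ℂ} (hX : X.IsHermitian)
    (P : Matrix (Fin d) (Fin d) ℂ) :
    (X * P).trace = ∑ i, (hX.eigenvalues i : ℂ) * q hX P i := by
  conv_lhs => rw [hX.spectral_theorem]
  rw [Unitary.conjStarAlgAut_apply, Matrix.mul_assoc, Matrix.trace_mul_comm, ← Matrix.mul_assoc,
    Matrix.trace_mul_comm, trace_diagonal_mul]
  refine Finset.sum_congr rfl fun i _ => ?_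
  rw [conj_diag]
  have hcol : (fun j => (hX.eigenvectorUnitary : Matrix (Fin d) (Fin d) ℂ) j i)
      = ⇑(hX.eigenvectorBasis i) := funext fun j => hX.eigenvectorUnitary_apply j i
  rw [hcol]
  rfl

lemma trace_q {X : Matrix (Fin d) (Fin d) ℂ} (hX : X.IsHermitian)
    (P : Matrix (Fin d) (Fin d) ℂ) :
    P.trace = ∑ i, q hX P i := by
  have h1 : P.trace = (star (hX.eigenvectorUnitary : Matrix (Fin d) (Fin d) ℂ) * P *
      (hX.eigenvectorUnitary : Matrix (Fin d) (Fin d) ℂ)).trace := by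
    rw [Matrix.trace_mul_cycle, Matrix.mem_unitaryGroup_iff.mp hX.eigenvectorUnitary.2, Matrix.one_mul]
  rw [h1, Matrix.trace]
  refine Finset.sum_congr rfl fun i _ => ?_
  show (star (hX.eigenvectorUnitary : Matrix (Fin d) (Fin d) ℂ) * P *
      (hX.eigenvectorUnitary : Matrix (Fin d) (Fin d) ℂ)) i i = _
  rw [conj_diag]
  have hcol : (fun j => (hX.eigenvectorUnitary : Matrix (Fin d) (Fin d) ℂ) j i)
      = ⇑(hX.eigenvectorBasis i) := funext fun j => hX.eigenvectorUnitary_apply j i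
  rw [hcol]
  rfl

lemma col_self_dot {X : Matrix (Fin d) (Fin d) ℂ} (hX : X.IsHermitian) (i : Fin d) :
    dotProduct (star (⇑(hX.eigenvectorBasis i))) (⇑(hX.eigenvectorBasis i)) = 1 := by
  have h : (inner ℂ (hX.eigenvectorBasis i) (hX.eigenvectorBasis i) : ℂ)
      = dotProduct (star (⇑(hX.eigenvectorBasis i))) (⇑(hX.eigenvectorBasis i)) := by
    rw [EuclideanSpace.inner_eq_star_dotProduct, dotProduct_comm]
  rw [← h, inner_self_eq_norm_sq_to_K, hX.eigenvectorBasis.orthonormal.1 i]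
  norm_num

lemma q_re_nonneg {X P : Matrix (Fin d) (Fin d) ℂ} (hX : X.IsHermitian)
    (hP : P.PosSemidef) (i : Fin d) : 0 ≤ (q hX P i).re := by
  have h : (0:ℂ) ≤ q hX P i := hP.dotProduct_mulVec_nonneg (⇑(hX.eigenvectorBasis i))
  simpa using (Complex.le_def.mp h).1

lemma q_re_le_one {X P : Matrix (Fin d) (Fin d) ℂ} (hX : X.IsHermitian)
    (hP1 : (1 - P).PosSemidef) (i : Fin d) : (q hX P i).re ≤ 1 := by
  have h := hP1.dotProduct_mulVec_nonneg (⇑(hX.eigenvectorBasis i))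
  rw [Matrix.sub_mulVec, Matrix.one_mulVec, dotProduct_sub, col_self_dot hX i] at h
  have h' : (0:ℂ) ≤ 1 - q hX P i := h
  have := (Complex.le_def.mp h').1
  simp only [Complex.zero_re, Complex.sub_re, Complex.one_re] at this
  linarith

lemma q_eq_one {X P : Matrix (Fin d) (Fin d) ℂ} (hX : X.IsHermitian) (i : Fin d)
    (hfix : P *ᵥ ⇑(hX.eigenvectorBasis i) = ⇑(hX.eigenvectorBasis i)) :
    q hX P i = 1 := by
  rw [q, hfix, col_self_dot hX i]

lemma upper {X P : Matrix (Fin d) (Fin d) ℂ} (hX : X.IsHermitian)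
    (hP : P.PosSemidef) (hP1 : (1 - P).PosSemidef) (t : ℝ) :
    ((X * P).trace).re - t * (P.trace).re ≤ ∑ i, max (hX.eigenvalues i - t) 0 := by
  rw [trace_mul_q hX P, trace_q hX P, Complex.re_sum, Complex.re_sum, Finset.mul_sum,
    ← Finset.sum_sub_distrib]
  refine Finset.sum_le_sum fun i _ => ?_
  have h0 := q_re_nonneg hX hP i
  have h1 := q_re_le_one hX hP1 i
  simp only [Complex.mul_re, Complex.ofReal_re, Complex.ofReal_im, zero_mul, sub_zero]
  rcases le_total (hX.eigenvalues i - t) 0 with h | h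
  · have : hX.eigenvalues i * (q hX P i).re - t * (q hX P i).re
        = (hX.eigenvalues i - t) * (q hX P i).re := by ring
    rw [this]
    exact le_trans (mul_nonpos_of_nonpos_of_nonneg h h0) (le_max_right _ _)
  · have hle : (hX.eigenvalues i - t) * (q hX P i).re ≤ (hX.eigenvalues i - t) * 1 :=
      mul_le_mul_of_nonneg_left h1 h
    calc hX.eigenvalues i * (q hX P i).re - t * (q hX P i).re
        = (hX.eigenvalues i - t) * (q hX P i).re := by ring
      _ ≤ (hX.eigenvalues i - t) * 1 := hle
      _ = hX.eigenvalues i - t := by ring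
      _ ≤ max (hX.eigenvalues i - t) 0 := le_max_left _ _

lemma lower {A P : Matrix (Fin d) (Fin d) ℂ} (hA : A.PosSemidef) (hP : P.PosSemidef) (t : ℝ)
    (hfix : ∀ i, t < hA.1.eigenvalues i →
      P *ᵥ ⇑(hA.1.eigenvectorBasis i) = ⇑(hA.1.eigenvectorBasis i)) :
    ∑ i, (if t < hA.1.eigenvalues i then hA.1.eigenvalues i else 0) ≤ ((A * P).trace).re := by
  rw [trace_mul_q hA.1 P, Complex.re_sum]
  refine Finset.sum_le_sum fun i _ => ?_
  simp only [Complex.mul_re, Complex.ofReal_re, Complex.ofReal_im, zero_mul, sub_zero]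
  by_cases h : t < hA.1.eigenvalues i
  · rw [if_pos h, q_eq_one hA.1 i (hfix i h)]
    norm_num
  · rw [if_neg h]
    exact mul_nonneg (hA.eigenvalues_nonneg i) (q_re_nonneg hA.1 hP i)

section Proj

variable {n : ℕ} (u : Fin n → Fin d → ℂ)

/-- projection matrix onto span of an orthonormal family -/
noncomputable def projM : Matrix (Fin d) (Fin d) ℂ :=
  Matrix.of (fun j k => ∑ m, u m j * (starRingEnd ℂ) (u m k))

lemma projM_mulVec (x : Fin d → ℂ) :
    projM u *ᵥ x = fun j => ∑ m, (dotProduct (star (u m)) x) * u m j := by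
  funext j
  simp only [projM, Matrix.mulVec, dotProduct, Matrix.of_apply, Finset.sum_mul,
    Pi.star_apply, RCLike.star_def]
  rw [Finset.sum_comm]
  exact Finset.sum_congr rfl fun m _ => Finset.sum_congr rfl fun k _ => by ring

lemma projM_quad (x : Fin d → ℂ) :
    dotProduct (star x) (projM u *ᵥ x)
      = ∑ m, (Complex.normSq (dotProduct (star (u m)) x) : ℂ) := by
  rw [projM_mulVec u x]
  simp only [dotProduct, Pi.star_apply, Finset.mul_sum, RCLike.star_def]
  rw [Finset.sum_comm]
  refine Finset.sum_congr rfl fun m _ => ?_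
  rw [← Complex.mul_conj (∑ k, (starRingEnd ℂ) (u m k) * x k), map_sum, Finset.mul_sum]
  refine Finset.sum_congr rfl fun j _ => ?_
  simp only [_root_.map_mul, RingHomCompTriple.comp_apply, starRingEnd_self_apply,
    RingHom.id_apply]
  ring

lemma projM_trace :
    (projM u).trace = ∑ m, dotProduct (star (u m)) (u m) := by
  rw [Matrix.trace]
  simp only [Matrix.diag, projM, Matrix.of_apply, dotProduct, Pi.star_apply,
    RCLike.star_def]
  rw [Finset.sum_comm]
  exact Finset.sum_congr rfl fun m _ => Finset.sum_congr rfl fun j _ => by ring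

lemma projM_isHermitian : (projM u).IsHermitian := by
  ext j k
  simp only [Matrix.conjTranspose_apply, projM, Matrix.of_apply, map_sum, _root_.map_mul,
    RingHomCompTriple.comp_apply, starRingEnd_self_apply, RCLike.star_def, RingHom.id_apply]
  exact Finset.sum_congr rfl fun m _ => by ring

lemma projM_posSemidef : (projM u).PosSemidef := by
  refine .of_dotProduct_mulVec_nonneg (projM_isHermitian u) fun x => ?_
  rw [projM_quad u x]
  refine Finset.sum_nonneg fun m _ => ?_
  rw [Complex.zero_le_real]
  exact Complex.normSq_nonneg _

lemma projM_one_sub_posSemidef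
    (hu : Orthonormal ℂ (fun m => (WithLp.equiv 2 (Fin d → ℂ)).symm (u m))) :
    (1 - projM u).PosSemidef := by
  refine .of_dotProduct_mulVec_nonneg ((Matrix.isHermitian_one).sub (projM_isHermitian u)) fun x => ?_
  rw [Matrix.sub_mulVec, Matrix.one_mulVec, dotProduct_sub, projM_quad u x]
  have hxx : dotProduct (star x) x = ((∑ j, Complex.normSq (x j) : ℝ) : ℂ) := by
    push_cast
    simp only [dotProduct, Pi.star_apply, RCLike.star_def]
    exact Finset.sum_congr rfl fun j _ => by
      rw [← Complex.normSq_eq_conj_mul_self]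
  rw [hxx, ← Complex.ofReal_sum, ← Complex.ofReal_sub, Complex.zero_le_real, sub_nonneg]
  -- Bessel's inequality
  have hb := hu.sum_inner_products_le ((WithLp.equiv 2 (Fin d → ℂ)).symm x)
      (s := Finset.univ)
  have hip : ∀ m, (inner ℂ ((WithLp.equiv 2 (Fin d → ℂ)).symm (u m))
      ((WithLp.equiv 2 (Fin d → ℂ)).symm x) : ℂ) = dotProduct (star (u m)) x :=
    fun m => by rw [WithLp.equiv_symm_apply, EuclideanSpace.inner_toLp_toLp, dotProduct_comm]
  have hnorm : ‖(WithLp.equiv 2 (Fin d → ℂ)).symm x‖ ^ 2 = ∑ j, Complex.normSq (x j) := by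
    rw [EuclideanSpace.norm_eq, Real.sq_sqrt (Finset.sum_nonneg fun j _ => sq_nonneg _)]
    exact Finset.sum_congr rfl fun j _ => by
      rw [← Complex.sq_norm]; rfl
  calc ∑ m, Complex.normSq (dotProduct (star (u m)) x)
      = ∑ m, ‖(inner ℂ ((WithLp.equiv 2 (Fin d → ℂ)).symm (u m))
          ((WithLp.equiv 2 (Fin d → ℂ)).symm x) : ℂ)‖ ^ 2 := by
        refine Finset.sum_congr rfl fun m _ => ?_
        rw [hip m, ← Complex.sq_norm]
    _ ≤ ‖(WithLp.equiv 2 (Fin d → ℂ)).symm x‖ ^ 2 := hb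
    _ = ∑ j, Complex.normSq (x j) := hnorm

lemma projM_fix (hu : ∀ m m', dotProduct (star (u m)) (u m') = if m = m' then 1 else 0)
    (x : Fin d → ℂ)
    (hx : (WithLp.equiv 2 (Fin d → ℂ)).symm x ∈ Submodule.span ℂ
      (Set.range (fun m => (WithLp.equiv 2 (Fin d → ℂ)).symm (u m)))) :
    projM u *ᵥ x = x := by
  have main : ∀ y : EuclideanSpace ℂ (Fin d), y ∈ Submodule.span ℂ
      (Set.range (fun m => (WithLp.equiv 2 (Fin d → ℂ)).symm (u m))) →
      projM u *ᵥ (WithLp.equiv 2 (Fin d → ℂ) y) = WithLp.equiv 2 (Fin d → ℂ) y := by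
    intro y hy
    induction hy using Submodule.span_induction with
    | mem z hz =>
      obtain ⟨m, rfl⟩ := hz
      simp only [Equiv.apply_symm_apply]
      rw [projM_mulVec]
      funext j
      simp only [hu]
      simp [ite_mul, Finset.sum_ite_eq]
    | zero => simp [Matrix.mulVec_zero]
    | add a b _ _ ha hb =>
      simp only [WithLp.equiv_apply, WithLp.ofLp_add] at ha hb ⊢; rw [Matrix.mulVec_add, ha, hb]
    | smul c a _ ha =>
      simp only [WithLp.equiv_apply, WithLp.ofLp_smul] at ha ⊢; rw [Matrix.mulVec_smul, ha]
  have := main _ hx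
  rwa [Equiv.apply_symm_apply] at this

end Proj

lemma exists_P {A B : Matrix (Fin d) (Fin d) ℂ} (hA : A.PosSemidef) (hB : B.PosSemidef) (t : ℝ) :
    ∃ P : Matrix (Fin d) (Fin d) ℂ, P.PosSemidef ∧ (1 - P).PosSemidef ∧
      (∀ i, t < hA.1.eigenvalues i →
        P *ᵥ ⇑(hA.1.eigenvectorBasis i) = ⇑(hA.1.eigenvectorBasis i)) ∧
      (∀ i, t < hB.1.eigenvalues i →
        P *ᵥ ⇑(hB.1.eigenvectorBasis i) = ⇑(hB.1.eigenvectorBasis i)) ∧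
      (P.trace).re ≤ (Fintype.card {i // t < hA.1.eigenvalues i}
        + Fintype.card {i // t < hB.1.eigenvalues i} : ℕ) := by
  classical
  let v : {i // t < hA.1.eigenvalues i} ⊕ {i // t < hB.1.eigenvalues i} →
      EuclideanSpace ℂ (Fin d) :=
    Sum.elim (fun i => hA.1.eigenvectorBasis i.1) (fun i => hB.1.eigenvectorBasis i.1)
  let K : Submodule ℂ (EuclideanSpace ℂ (Fin d)) := Submodule.span ℂ (Set.range v)
  let b := stdOrthonormalBasis ℂ K
  let u : Fin (Module.finrank ℂ K) → (Fin d → ℂ) :=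
    fun m => WithLp.equiv 2 (Fin d → ℂ) ((b m : EuclideanSpace ℂ (Fin d)))
  have hsymm : ∀ m, (WithLp.equiv 2 (Fin d → ℂ)).symm (u m)
      = ((b m : EuclideanSpace ℂ (Fin d))) := fun m => Equiv.symm_apply_apply _ _
  have hortho : Orthonormal ℂ (fun m => (WithLp.equiv 2 (Fin d → ℂ)).symm (u m)) := by
    rw [orthonormal_iff_ite]
    intro m m'
    rw [hsymm m, hsymm m', ← Submodule.coe_inner]
    exact orthonormal_iff_ite.mp b.orthonormal m m'
  have hu : ∀ m m', dotProduct (star (u m)) (u m') = if m = m' then 1 else 0 := by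
    intro m m'
    rw [dotProduct_comm, ← EuclideanSpace.inner_toLp_toLp,
      (show ∀ m, WithLp.toLp 2 (u m) = (b m : EuclideanSpace ℂ (Fin d)) from hsymm),
      (show ∀ m, WithLp.toLp 2 (u m) = (b m : EuclideanSpace ℂ (Fin d)) from hsymm),
      ← Submodule.coe_inner]
    exact orthonormal_iff_ite.mp b.orthonormal m m'
  have hspan : Submodule.span ℂ
      (Set.range (fun m => (WithLp.equiv 2 (Fin d → ℂ)).symm (u m))) = K := by
    have h1 : (fun m => (WithLp.equiv 2 (Fin d → ℂ)).symm (u m))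
        = fun m => ((b m : EuclideanSpace ℂ (Fin d))) := funext hsymm
    rw [h1]
    have h2 : Set.range (fun m => ((b m : EuclideanSpace ℂ (Fin d))))
        = K.subtype '' Set.range ⇑b := by
      rw [← Set.range_comp]; rfl
    rw [h2, Submodule.span_image, ← b.coe_toBasis, b.toBasis.span_eq, Submodule.map_top,
      Submodule.range_subtype]
  have hfix : ∀ x : Fin d → ℂ, (WithLp.equiv 2 (Fin d → ℂ)).symm x ∈ K → projM u *ᵥ x = x := by
    intro x hx
    exact projM_fix u hu x (by rwa [hspan])
  refine ⟨projM u, projM_posSemidef u, projM_one_sub_posSemidef u hortho, ?_, ?_, ?_⟩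
  · intro i hi
    refine hfix _ ?_
    have : (WithLp.equiv 2 (Fin d → ℂ)).symm (WithLp.equiv 2 (Fin d → ℂ)
        (hA.1.eigenvectorBasis i)) = hA.1.eigenvectorBasis i := Equiv.symm_apply_apply _ _
    rw [WithLp.equiv_symm_apply, WithLp.toLp_ofLp]
    exact Submodule.subset_span ⟨Sum.inl ⟨i, hi⟩, rfl⟩
  · intro i hi
    refine hfix _ ?_
    have : (WithLp.equiv 2 (Fin d → ℂ)).symm (WithLp.equiv 2 (Fin d → ℂ)
        (hB.1.eigenvectorBasis i)) = hB.1.eigenvectorBasis i := Equiv.symm_apply_apply _ _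
    rw [WithLp.equiv_symm_apply, WithLp.toLp_ofLp]
    exact Submodule.subset_span ⟨Sum.inr ⟨i, hi⟩, rfl⟩
  · have htr : (projM u).trace = (Module.finrank ℂ K : ℂ) := by
      rw [projM_trace]
      have : ∀ m, dotProduct (star (u m)) (u m) = 1 := by
        intro m; rw [hu m m, if_pos rfl]
      simp [this]
    rw [htr]
    have hle : Module.finrank ℂ K ≤ Fintype.card {i // t < hA.1.eigenvalues i}
        + Fintype.card {i // t < hB.1.eigenvalues i} := by
      have h1 := finrank_span_le_card (R := ℂ) (Set.range v)
      rw [Set.toFinset_card] at h1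
      exact h1.trans ((Fintype.card_range_le v).trans (by rw [Fintype.card_sum]))
    simpa using Nat.cast_le.mpr hle

lemma max_sum_ite (lam : Fin d → ℝ) (t : ℝ) :
    ∑ i, max (lam i - t) 0
      = ∑ i, (if t < lam i then lam i else 0) - t * ∑ i, (if t < lam i then (1:ℝ) else 0) := by
  rw [Finset.mul_sum, ← Finset.sum_sub_distrib]
  refine Finset.sum_congr rfl fun i _ => ?_
  by_cases h : t < lam i
  · rw [if_pos h, if_pos h, max_eq_left (by linarith)]; ring
  · rw [if_neg h, if_neg h, max_eq_right (by push_neg at h; linarith)]; ring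

lemma card_eq_sum_ite (lam : Fin d → ℝ) (t : ℝ) :
    ((Fintype.card {i // t < lam i} : ℕ) : ℝ) = ∑ i, (if t < lam i then (1:ℝ) else 0) := by
  classical
  rw [Finset.sum_boole, Fintype.card_subtype]

lemma key {A B : Matrix (Fin d) (Fin d) ℂ} (hA : A.PosSemidef) (hB : B.PosSemidef)
    {t : ℝ} (ht : 0 ≤ t) :
    ∑ i, max (hA.1.eigenvalues i - t) 0 + ∑ i, max (hB.1.eigenvalues i - t) 0
      ≤ ∑ i, max ((hA.add hB).1.eigenvalues i - t) 0 := by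
  obtain ⟨P, hP, hP1, hfixA, hfixB, htr⟩ := exists_P hA hB t
  have hup := upper (hA.add hB).1 hP hP1 t
  have hlA := lower hA hP t hfixA
  have hlB := lower hB hP t hfixB
  have hsplit : (((A + B) * P).trace).re = ((A * P).trace).re + ((B * P).trace).re := by
    rw [Matrix.add_mul, Matrix.trace_add, Complex.add_re]
  have hcard : (P.trace).re ≤ ∑ i, (if t < hA.1.eigenvalues i then (1:ℝ) else 0)
      + ∑ i, (if t < hB.1.eigenvalues i then (1:ℝ) else 0) := by
    rw [← card_eq_sum_ite, ← card_eq_sum_ite]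
    exact htr.trans (by push_cast; ring_nf; norm_num)
  have hmul : t * (P.trace).re ≤ t * (∑ i, (if t < hA.1.eigenvalues i then (1:ℝ) else 0)
      + ∑ i, (if t < hB.1.eigenvalues i then (1:ℝ) else 0)) :=
    mul_le_mul_of_nonneg_left hcard ht
  rw [max_sum_ite, max_sum_ite]
  rw [hsplit] at hup
  linarith

lemma integrable_min_rpow {α : ℝ} (hα : α ∈ Set.Ioo (0:ℝ) 1) {x : ℝ} (hx : 0 ≤ x) :
    IntegrableOn (fun s => min x s * s ^ (α - 2)) (Ioi (0:ℝ)) := by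
  obtain ⟨hα0, hα1⟩ := hα
  rcases eq_or_lt_of_le hx with h | h
  · have hx0 : x = 0 := h.symm
    subst hx0
    refine (integrableOn_congr_fun (f := fun _ => (0:ℝ)) ?_ measurableSet_Ioi).mp
      integrableOn_zero
    intro s hs
    show (0:ℝ) = min 0 s * s ^ (α - 2)
    rw [min_eq_left (le_of_lt (mem_Ioi.mp hs))]
    ring
  · -- x > 0
    have h1 : IntegrableOn (fun s => min x s * s ^ (α - 2)) (Ioc (0:ℝ) x) := by
      refine (integrableOn_congr_fun (f := fun s => s ^ (α - 1)) ?_ measurableSet_Ioc).mp ?_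
      · intro s hs
        show s ^ (α - 1) = min x s * s ^ (α - 2)
        rw [min_eq_right hs.2, show α - 1 = 1 + (α - 2) by ring, Real.rpow_add hs.1,
          Real.rpow_one]
      · have := intervalIntegral.intervalIntegrable_rpow' (a := 0) (b := x)
          (r := α - 1) (by linarith)
        rw [intervalIntegrable_iff, uIoc_of_le (le_of_lt h)] at this
        exact this
    have h2 : IntegrableOn (fun s => min x s * s ^ (α - 2)) (Ioi x) := by
      refine (integrableOn_congr_fun (f := fun s => x * s ^ (α - 2)) ?_ measurableSet_Ioi).mp ?_
      · intro s hs
        show x * s ^ (α - 2) = min x s * s ^ (α - 2)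
        rw [min_eq_left (le_of_lt (mem_Ioi.mp hs))]
      · exact (integrableOn_Ioi_rpow_of_lt (by linarith) h).const_mul x
    have := h1.union h2
    rwa [Ioc_union_Ioi_eq_Ioi (le_of_lt h)] at this

lemma integral_min_rpow {α : ℝ} (hα : α ∈ Set.Ioo (0:ℝ) 1) {x : ℝ} (hx : 0 ≤ x) :
    ∫ s in Ioi (0:ℝ), min x s * s ^ (α - 2) = x ^ α / (α * (1 - α)) := by
  obtain ⟨hα0, hα1⟩ := hα
  have hne1 : α ≠ 0 := ne_of_gt hα0
  have hne2 : (1:ℝ) - α ≠ 0 := by linarith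
  rcases eq_or_lt_of_le hx with h | h
  · have hx0 : x = 0 := h.symm
    subst hx0
    rw [show (∫ s in Ioi (0:ℝ), min 0 s * s ^ (α - 2)) = ∫ _ in Ioi (0:ℝ), (0:ℝ) from
      setIntegral_congr_fun measurableSet_Ioi fun s hs => by
        rw [min_eq_left (le_of_lt (mem_Ioi.mp hs))]; ring]
    rw [integral_zero, Real.zero_rpow hne1, zero_div]
  · have h1 : IntegrableOn (fun s => min x s * s ^ (α - 2)) (Ioc (0:ℝ) x) :=
      (integrable_min_rpow ⟨hα0, hα1⟩ hx).mono_set Ioc_subset_Ioi_self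
    have h2 : IntegrableOn (fun s => min x s * s ^ (α - 2)) (Ioi x) :=
      (integrable_min_rpow ⟨hα0, hα1⟩ hx).mono_set (Ioi_subset_Ioi (le_of_lt h))
    rw [← Ioc_union_Ioi_eq_Ioi (le_of_lt h),
      setIntegral_union (Ioc_disjoint_Ioi le_rfl) measurableSet_Ioi h1 h2]
    have e1 : ∫ s in Ioc (0:ℝ) x, min x s * s ^ (α - 2) = x ^ α / α := by
      rw [show (∫ s in Ioc (0:ℝ) x, min x s * s ^ (α - 2)) = ∫ s in Ioc (0:ℝ) x, s ^ (α - 1) from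
        setIntegral_congr_fun measurableSet_Ioc fun s hs => by
          rw [min_eq_right hs.2, show α - 1 = 1 + (α - 2) by ring, Real.rpow_add hs.1,
            Real.rpow_one]]
      rw [← intervalIntegral.integral_of_le (le_of_lt h)]
      rw [integral_rpow (Or.inl (by linarith))]
      rw [show α - 1 + 1 = α by ring, Real.zero_rpow hne1]
      ring
    have e2 : ∫ s in Ioi x, min x s * s ^ (α - 2) = x ^ α / (1 - α) := by
      rw [show (∫ s in Ioi x, min x s * s ^ (α - 2)) = ∫ s in Ioi x, x * s ^ (α - 2) from
        setIntegral_congr_fun measurableSet_Ioi fun s hs => by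
          rw [min_eq_left (le_of_lt (mem_Ioi.mp hs))]]
      rw [MeasureTheory.integral_const_mul, integral_Ioi_rpow_of_lt (by linarith) h]
      have hx1 : x ^ (α - 2 + 1) = x ^ α / x := by
        rw [show α - 2 + 1 = α - 1 by ring, Real.rpow_sub h, Real.rpow_one]
      rw [hx1]
      have hα1' : α - 1 ≠ 0 := by linarith
      rw [eq_div_iff hne2]
      have hne4 : -x + x * α ≠ 0 := fun hc => (mul_ne_zero h.ne' hα1') (by linarith)
      rw [show α - 2 + 1 = -(1 - α) by ring, neg_div_neg_eq, mul_assoc,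
        div_mul_cancel₀ _ hne2]
      field_simp
    rw [e1, e2, div_add_div _ _ hne1 hne2,
      div_eq_div_iff (mul_ne_zero hne1 hne2) (mul_ne_zero hne1 hne2)]
    ring

lemma sum_rpow_le_of_min {α : ℝ} (hα : α ∈ Set.Ioo (0:ℝ) 1) {ι : Type*} [Fintype ι]
    (lam mu nu : ι → ℝ) (hlam : ∀ i, 0 ≤ lam i) (hmu : ∀ i, 0 ≤ mu i) (hnu : ∀ i, 0 ≤ nu i)
    (hmin : ∀ t : ℝ, 0 < t →
      ∑ i, min (mu i) t ≤ ∑ i, min (lam i) t + ∑ i, min (nu i) t) :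
    ∑ i, mu i ^ α ≤ ∑ i, lam i ^ α + ∑ i, nu i ^ α := by
  obtain ⟨hα0, hα1⟩ := hα
  have hc : 0 < α * (1 - α) := mul_pos hα0 (by linarith)
  have hIl : IntegrableOn (fun s => ∑ i, min (lam i) s * s ^ (α - 2)) (Ioi (0:ℝ)) :=
    MeasureTheory.integrable_finset_sum _ (fun i _ => integrable_min_rpow ⟨hα0, hα1⟩ (hlam i))
  have hIm : IntegrableOn (fun s => ∑ i, min (mu i) s * s ^ (α - 2)) (Ioi (0:ℝ)) :=
    MeasureTheory.integrable_finset_sum _ (fun i _ => integrable_min_rpow ⟨hα0, hα1⟩ (hmu i))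
  have hIn : IntegrableOn (fun s => ∑ i, min (nu i) s * s ^ (α - 2)) (Ioi (0:ℝ)) :=
    MeasureTheory.integrable_finset_sum _ (fun i _ => integrable_min_rpow ⟨hα0, hα1⟩ (hnu i))
  have h0 : 0 ≤ ∫ s in Ioi (0:ℝ), ((∑ i, min (lam i) s * s ^ (α - 2))
      + (∑ i, min (nu i) s * s ^ (α - 2)) - (∑ i, min (mu i) s * s ^ (α - 2))) := by
    refine setIntegral_nonneg measurableSet_Ioi fun s hs => ?_
    have hw : (0:ℝ) ≤ s ^ (α - 2) := Real.rpow_nonneg (le_of_lt (mem_Ioi.mp hs)) _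
    rw [← Finset.sum_mul, ← Finset.sum_mul, ← Finset.sum_mul]
    have hmm := mul_le_mul_of_nonneg_right (hmin s (mem_Ioi.mp hs)) hw
    rw [add_mul] at hmm
    linarith
  have hIln : IntegrableOn (fun s => (∑ i, min (lam i) s * s ^ (α - 2))
      + (∑ i, min (nu i) s * s ^ (α - 2))) (Ioi (0:ℝ)) := hIl.add hIn
  rw [MeasureTheory.integral_sub hIln hIm, MeasureTheory.integral_add hIl hIn] at h0
  rw [MeasureTheory.integral_finset_sum _ (fun i _ => integrable_min_rpow ⟨hα0, hα1⟩ (hlam i)),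
    MeasureTheory.integral_finset_sum _ (fun i _ => integrable_min_rpow ⟨hα0, hα1⟩ (hmu i)),
    MeasureTheory.integral_finset_sum _ (fun i _ => integrable_min_rpow ⟨hα0, hα1⟩ (hnu i))] at h0
  have he : ∀ (f : ι → ℝ), (∀ i, 0 ≤ f i) →
      ∑ i, (∫ s in Ioi (0:ℝ), min (f i) s * s ^ (α - 2)) = (∑ i, f i ^ α) / (α * (1 - α)) := by
    intro f hf
    rw [Finset.sum_div]
    exact Finset.sum_congr rfl fun i _ => integral_min_rpow ⟨hα0, hα1⟩ (hf i)
  rw [he lam hlam, he mu hmu, he nu hnu] at h0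
  have h2 : 0 ≤ ((∑ i, lam i ^ α) / (α * (1 - α)) + (∑ i, nu i ^ α) / (α * (1 - α))
      - (∑ i, mu i ^ α) / (α * (1 - α))) * (α * (1 - α)) := mul_nonneg h0 hc.le
  rw [sub_mul, add_mul, div_mul_cancel₀ _ hc.ne', div_mul_cancel₀ _ hc.ne',
    div_mul_cancel₀ _ hc.ne'] at h2
  linarith

lemma mPow_trace_re {X : Matrix (Fin d) (Fin d) ℂ} (hX : X.PosSemidef) {α : ℝ} (hα0 : 0 < α) :
    ((mPow X α).trace).re = ∑ i, (hX.1.eigenvalues i) ^ α := by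
  rw [mPow, dif_pos hX.1, trace_unitary_conj, Complex.re_sum]
  refine Finset.sum_congr rfl fun i _ => ?_
  rw [Complex.ofReal_re]
  by_cases h : hX.1.eigenvalues i = 0
  · rw [if_pos h, h, Real.zero_rpow (ne_of_gt hα0)]
  · rw [if_neg h]

lemma trace_re_eq_sum {X : Matrix (Fin d) (Fin d) ℂ} (hX : X.IsHermitian) :
    (X.trace).re = ∑ i, hX.eigenvalues i := by
  conv_lhs => rw [hX.spectral_theorem]
  rw [Unitary.conjStarAlgAut_apply, trace_unitary_conj, Complex.re_sum]
  refine Finset.sum_congr rfl fun i _ => ?_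
  simp

lemma min_sum_eq (f : Fin d → ℝ) (t : ℝ) :
    ∑ i, min (f i) t = ∑ i, f i - ∑ i, max (f i - t) 0 := by
  rw [← Finset.sum_sub_distrib]
  refine Finset.sum_congr rfl fun i _ => ?_
  rcases le_total (f i) t with h | h
  · rw [min_eq_left h, max_eq_right (by linarith)]; ring
  · rw [min_eq_right h, max_eq_left (by linarith)]; ring

end TrSub

theorem trace_rpow_add_le {d : ℕ} (hd : 1 ≤ d) (A B : Matrix (Fin d) (Fin d) ℂ)
    (hA : A.PosSemidef) (hB : B.PosSemidef) {α : ℝ} (hα : α ∈ Set.Ioo (0 : ℝ) 1) :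
    ((mPow (A + B) α).trace).re ≤ ((mPow A α).trace).re + ((mPow B α).trace).re := by
  have hAB : (A + B).PosSemidef := hA.add hB
  rw [TrSub.mPow_trace_re hAB hα.1, TrSub.mPow_trace_re hA hα.1, TrSub.mPow_trace_re hB hα.1]
  refine TrSub.sum_rpow_le_of_min hα _ _ _ hA.eigenvalues_nonneg hAB.eigenvalues_nonneg
    hB.eigenvalues_nonneg ?_
  intro t ht
  have hkey := TrSub.key hA hB ht.le
  have hsum : ∑ i, hAB.1.eigenvalues i = ∑ i, hA.1.eigenvalues i + ∑ i, hB.1.eigenvalues i := by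
    have e1 := TrSub.trace_re_eq_sum hAB.1
    have e2 := TrSub.trace_re_eq_sum hA.1
    have e3 := TrSub.trace_re_eq_sum hB.1
    have e4 : ((A + B).trace).re = (A.trace).re + (B.trace).re := by
      rw [Matrix.trace_add, Complex.add_re]
    linarith
  rw [TrSub.min_sum_eq, TrSub.min_sum_eq, TrSub.min_sum_eq]
  linarith
end

section
/- Let ρ and σ be states (positive semidefinite d×d complex matrices of trace 1) with supp ρ ⊆ supp σ. Then Tr(ρ^{3/2} σ^{−1/2}) + Tr(ρ^{1/2} σ^{1/2}) ≥ 2; consequently κ := log(1 + Tr(ρ^{3/2} σ^{−1/2}) + Tr(ρ^{1/2} σ^{1/2})) ≥ log 3 > 1. -/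
open scoped BigOperators ComplexOrder

lemma trace_form_aux {d : ℕ} (F G : Fin d → ℝ) (W : Matrix (Fin d) (Fin d) ℂ) :
    (Matrix.diagonal (fun i => (F i : ℂ)) * W * Matrix.diagonal (fun j => (G j : ℂ)) * star W).trace
      = ((∑ i, ∑ j, F i * G j * Complex.normSq (W i j) : ℝ) : ℂ) := by
  have h : ∀ i j, (Matrix.diagonal (fun i => (F i : ℂ)) * W * Matrix.diagonal (fun j => (G j : ℂ))) i j
      = (F i : ℂ) * W i j * (G j : ℂ) := by
    intro i j; rw [Matrix.mul_diagonal, Matrix.diagonal_mul]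
  calc (Matrix.diagonal (fun i => (F i : ℂ)) * W * Matrix.diagonal (fun j => (G j : ℂ)) * star W).trace
      = ∑ i, ∑ j, (Matrix.diagonal (fun i => (F i : ℂ)) * W * Matrix.diagonal (fun j => (G j : ℂ))) i j * (star W) j i := by
        simp [Matrix.trace, Matrix.mul_apply, Matrix.diag]
    _ = ∑ i, ∑ j, ((F i : ℂ) * (G j : ℂ)) * ((Complex.normSq (W i j) : ℝ) : ℂ) := by
        refine Finset.sum_congr rfl fun i _ => Finset.sum_congr rfl fun j _ => ?_
        rw [h, Matrix.star_apply, Complex.star_def, ← Complex.mul_conj]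
        ring
    _ = _ := by push_cast; ring

lemma pt_ineq (x y c : ℝ) (hx : 0 ≤ x) (hy : 0 ≤ y) (hc : 0 ≤ c)
    (h0 : y = 0 → x = 0 ∨ c = 0) :
    2 * x * c ≤ (if x = 0 then 0 else x ^ ((3:ℝ)/2)) * (if y = 0 then 0 else y ^ (-((1:ℝ)/2))) * c
      + (if x = 0 then 0 else x ^ ((1:ℝ)/2)) * (if y = 0 then 0 else y ^ ((1:ℝ)/2)) * c := by
  rcases eq_or_lt_of_le hx with hx0 | hx'
  · simp [← hx0]
  · rcases eq_or_ne y 0 with rfl | hy'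
    · rcases h0 rfl with h | h
      · exact absurd h hx'.ne'
      · simp [h]
    · have hy'' : 0 < y := lt_of_le_of_ne hy (Ne.symm hy')
      rw [if_neg hx'.ne', if_neg hx'.ne', if_neg hy', if_neg hy']
      have hp : 0 < x ^ ((1:ℝ)/2) := Real.rpow_pos_of_pos hx' _
      have hq : 0 < y ^ ((1:ℝ)/2) := Real.rpow_pos_of_pos hy'' _
      set p := x ^ ((1:ℝ)/2) with hpdef
      set q := y ^ ((1:ℝ)/2) with hqdef
      have hx2 : x = p ^ 2 := by
        rw [hpdef, ← Real.rpow_natCast (x ^ ((1:ℝ)/2)) 2, ← Real.rpow_mul hx'.le]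
        norm_num
      have hx3 : x ^ ((3:ℝ)/2) = p ^ 3 := by
        rw [hpdef, ← Real.rpow_natCast (x ^ ((1:ℝ)/2)) 3, ← Real.rpow_mul hx'.le]
        norm_num
      have hyneg : y ^ (-((1:ℝ)/2)) = q⁻¹ := by
        rw [hqdef, ← Real.rpow_neg hy]
      have key2 : 2 * p ^ 2 * q ≤ p ^ 3 + p * q * q := by
        nlinarith [mul_nonneg hp.le (sq_nonneg (p - q))]
      have key3 : 2 * p ^ 2 ≤ p ^ 3 * q⁻¹ + p * q := by
        have hdiv : p ^ 3 * q⁻¹ + p * q = (p ^ 3 + p * q * q) / q := by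
          field_simp
        rw [hdiv, le_div_iff₀ hq]
        linarith
      calc 2 * x * c = 2 * p ^ 2 * c := by rw [← hx2]
        _ ≤ (p ^ 3 * q⁻¹ + p * q) * c := mul_le_mul_of_nonneg_right key3 hc
        _ = x ^ ((3:ℝ)/2) * y ^ (-((1:ℝ)/2)) * c + x ^ ((1:ℝ)/2) * y ^ ((1:ℝ)/2) * c := by
            rw [hx3, hyneg]; ring

theorem kappa_gt_one {d : ℕ} (hd : 1 ≤ d)
    (ρ σ : Matrix (Fin d) (Fin d) ℂ)
    (hρ : ρ.PosSemidef) (hσ : σ.PosSemidef)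
    (hρ1 : ρ.trace = 1) (hσ1 : σ.trace = 1)
    (hsupp : suppLe ρ σ) :
    2 ≤ ((mPow ρ (3/2) * mPow σ (-(1/2))).trace).re
          + ((mPow ρ (1/2) * mPow σ (1/2)).trace).re ∧
    Real.log 3 ≤ Real.log (1 + ((mPow ρ (3/2) * mPow σ (-(1/2))).trace).re
          + ((mPow ρ (1/2) * mPow σ (1/2)).trace).re) ∧
    1 < Real.log 3 := by
  classical
  set U : Matrix (Fin d) (Fin d) ℂ := (hρ.1.eigenvectorUnitary : Matrix (Fin d) (Fin d) ℂ) with hUdef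
  set V : Matrix (Fin d) (Fin d) ℂ := (hσ.1.eigenvectorUnitary : Matrix (Fin d) (Fin d) ℂ) with hVdef
  set a : Fin d → ℝ := hρ.1.eigenvalues with hadef
  set b : Fin d → ℝ := hσ.1.eigenvalues with hbdef
  set W : Matrix (Fin d) (Fin d) ℂ := star U * V with hWdef
  have hU1 : U * star U = 1 := Matrix.mem_unitaryGroup_iff.mp hρ.1.eigenvectorUnitary.2
  have hU2 : star U * U = 1 := Matrix.mem_unitaryGroup_iff'.mp hρ.1.eigenvectorUnitary.2
  have hV1 : V * star V = 1 := Matrix.mem_unitaryGroup_iff.mp hσ.1.eigenvectorUnitary.2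
  have hV2 : star V * V = 1 := Matrix.mem_unitaryGroup_iff'.mp hσ.1.eigenvectorUnitary.2
  -- key trace formula
  have key : ∀ F G : Fin d → ℝ,
      (U * Matrix.diagonal (fun i => (F i : ℂ)) * star U *
        (V * Matrix.diagonal (fun j => (G j : ℂ)) * star V)).trace
        = ((∑ i, ∑ j, F i * G j * Complex.normSq (W i j) : ℝ) : ℂ) := by
    intro F G
    have e1 : U * Matrix.diagonal (fun i => (F i : ℂ)) * star U *
        (V * Matrix.diagonal (fun j => (G j : ℂ)) * star V)
        = U * (Matrix.diagonal (fun i => (F i : ℂ)) * W * Matrix.diagonal (fun j => (G j : ℂ)) * star W) * star U := by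
      simp only [hWdef, star_mul, star_star, mul_assoc]
      rw [hU1, mul_one]
    rw [e1, Matrix.trace_mul_cycle, ← Matrix.mul_assoc, hU2, Matrix.one_mul]
    exact trace_form_aux F G W
  -- row sums of |W|^2 equal 1
  have hsum_c : ∀ i, ∑ j, Complex.normSq (W i j) = 1 := by
    intro i
    have hWW : W * star W = 1 := by
      calc W * star W = star U * V * (star V * U) := by rw [hWdef, star_mul, star_star, mul_assoc]
        _ = star U * (V * star V) * U := by rw [← mul_assoc, mul_assoc (star U) V (star V)]
        _ = 1 := by rw [hV1, mul_one, hU2]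
    have h1 : (W * star W) i i = 1 := by rw [hWW]; simp
    rw [Matrix.mul_apply] at h1
    have h2 : (((∑ j, Complex.normSq (W i j)) : ℝ) : ℂ) = 1 := by
      rw [← h1]
      push_cast
      refine Finset.sum_congr rfl fun j _ => ?_
      rw [Matrix.star_apply, Complex.star_def, Complex.mul_conj]
    exact_mod_cast h2
  -- sum of eigenvalues of ρ is 1
  have hsuma : ∑ i, a i = 1 := by
    have htr : ρ.trace = ∑ i, (a i : ℂ) := by
      conv_lhs => rw [hρ.1.spectral_theorem, Unitary.conjStarAlgAut_apply]
      rw [Matrix.trace_mul_cycle, hU2, Matrix.one_mul, Matrix.trace_diagonal]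
      simp [RCLike.ofReal, hadef]
    rw [hρ1] at htr
    exact_mod_cast htr.symm
  -- support condition
  have hker : ∀ i j, b j = 0 → a i ≠ 0 → W i j = 0 := by
    intro i j hbj hai
    set v : Fin d → ℂ := fun k => V k j with hvdef
    have hσv : σ.mulVec v = 0 := by
      have hσV : σ * V = V * Matrix.diagonal (RCLike.ofReal ∘ b) := by
        conv_lhs => rw [hσ.1.spectral_theorem, Unitary.conjStarAlgAut_apply]
        simp only [mul_assoc]
        rw [hV2, mul_one]
      funext k
      have h1 : (σ.mulVec v) k = (σ * V) k j := by
        simp [Matrix.mulVec, dotProduct, Matrix.mul_apply, hvdef]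
      rw [h1, hσV, Matrix.mul_diagonal]
      simp [hbj]
    have hmem : ρ.mulVec v ∈ LinearMap.range (Matrix.toLin' σ) :=
      hsupp ⟨v, Matrix.toLin'_apply ρ v⟩
    obtain ⟨w, hw⟩ := hmem
    have hρv : ρ.mulVec v = 0 := by
      rw [← hρ.dotProduct_mulVec_zero_iff v, ← hw, Matrix.toLin'_apply, Matrix.dotProduct_mulVec]
      have hzero : Matrix.vecMul (star v) σ = 0 := by
        have hsm : star (σ.mulVec v) = Matrix.vecMul (star v) σ.conjTranspose := Matrix.star_mulVec σ v
        rw [hσv, star_zero, hσ.1.eq] at hsm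
        exact hsm.symm
      rw [hzero, zero_dotProduct]
    have h2 : ∀ k, (ρ * V) k j = 0 := by
      intro k
      have : (ρ * V) k j = (ρ.mulVec v) k := by
        simp [Matrix.mulVec, dotProduct, Matrix.mul_apply, hvdef]
      rw [this, hρv, Pi.zero_apply]
    have h3 : (star U * ρ * V) i j = 0 := by
      rw [Matrix.mul_assoc, Matrix.mul_apply]
      exact Finset.sum_eq_zero fun k _ => by rw [h2 k, mul_zero]
    have h4 : star U * ρ * V = Matrix.diagonal (RCLike.ofReal ∘ a) * W := by
      conv_lhs => rw [hρ.1.spectral_theorem, Unitary.conjStarAlgAut_apply]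
      calc star U * (U * Matrix.diagonal (RCLike.ofReal ∘ a) * star U) * V
          = (star U * U) * (Matrix.diagonal (RCLike.ofReal ∘ a) * (star U * V)) := by
            simp only [mul_assoc]
        _ = Matrix.diagonal (RCLike.ofReal ∘ a) * W := by rw [hU2, one_mul, hWdef]
    rw [h4, Matrix.diagonal_mul] at h3
    rcases mul_eq_zero.mp h3 with h | h
    · exfalso
      apply hai
      have : ((a i : ℝ) : ℂ) = 0 := h
      exact_mod_cast this
    · exact h
  -- rewrite the two traces
  have h1 : (mPow ρ (3/2) * mPow σ (-(1/2))).trace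
      = ((∑ i, ∑ j, (if a i = 0 then 0 else a i ^ ((3:ℝ)/2)) *
          (if b j = 0 then 0 else b j ^ (-((1:ℝ)/2))) * Complex.normSq (W i j) : ℝ) : ℂ) := by
    simp only [mPow]
    rw [dif_pos hρ.1, dif_pos hσ.1]
    exact key _ _
  have h2 : (mPow ρ (1/2) * mPow σ (1/2)).trace
      = ((∑ i, ∑ j, (if a i = 0 then 0 else a i ^ ((1:ℝ)/2)) *
          (if b j = 0 then 0 else b j ^ ((1:ℝ)/2)) * Complex.normSq (W i j) : ℝ) : ℂ) := by
    simp only [mPow]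
    rw [dif_pos hρ.1, dif_pos hσ.1]
    exact key _ _
  -- the main inequality
  have main : 2 ≤ ((mPow ρ (3/2) * mPow σ (-(1/2))).trace).re
      + ((mPow ρ (1/2) * mPow σ (1/2)).trace).re := by
    rw [h1, h2, Complex.ofReal_re, Complex.ofReal_re, ← Finset.sum_add_distrib]
    have h2eq : (2:ℝ) = ∑ i, ∑ j, 2 * a i * Complex.normSq (W i j) := by
      have hrow : ∀ i, ∑ j, 2 * a i * Complex.normSq (W i j) = 2 * a i := by
        intro i; rw [← Finset.mul_sum, hsum_c, mul_one]
      rw [Finset.sum_congr rfl fun i _ => hrow i, ← Finset.mul_sum, hsuma, mul_one]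
    refine le_trans h2eq.le ?_
    refine Finset.sum_le_sum fun i _ => ?_
    rw [← Finset.sum_add_distrib]
    refine Finset.sum_le_sum fun j _ => ?_
    exact pt_ineq (a i) (b j) (Complex.normSq (W i j)) (hρ.eigenvalues_nonneg i)
      (hσ.eigenvalues_nonneg j) (Complex.normSq_nonneg _)
      (fun hbj => by
        rcases eq_or_ne (a i) 0 with h | h
        · exact Or.inl h
        · exact Or.inr (by rw [hker i j hbj h, Complex.normSq_zero]))
  refine ⟨main, ?_, ?_⟩
  · have h3 : (3:ℝ) ≤ 1 + ((mPow ρ (3/2) * mPow σ (-(1/2))).trace).re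
        + ((mPow ρ (1/2) * mPow σ (1/2)).trace).re := by linarith
    exact Real.log_le_log (by norm_num) (by linarith)
  · rw [show (1:ℝ) = Real.log (Real.exp 1) by rw [Real.log_exp]]
    exact Real.log_lt_log (Real.exp_pos 1) (Real.exp_one_lt_d9.trans_le (by norm_num))
end

section
/- Let ρ and σ be nonzero positive semidefinite d×d complex matrices with supp ρ ⊆ supp σ. Then the function α ↦ log Tr(ρ^α σ^{1−α}) is convex on ℝ. -/
open scoped BigOperators ComplexOrder

/-- Convexity of the log of a sum of "geometric-mean-multiplicative" nonnegative functions. -/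
lemma key_convex {ι : Type*} [Fintype ι] (φ : ℝ → ι → ℝ)
    (hnn : ∀ α i, 0 ≤ φ α i)
    (hmult : ∀ x y : ℝ, ∀ p q : ℝ, 0 < p → 0 < q → p + q = 1 →
      ∀ i, φ (p * x + q * y) i = (φ x i) ^ p * (φ y i) ^ q)
    (hpos : ∀ α, 0 < ∑ i, φ α i) :
    ConvexOn ℝ Set.univ (fun α => Real.log (∑ i, φ α i)) := by
  refine ⟨convex_univ, ?_⟩
  intro x _ y _ p q hp hq hpq
  rcases eq_or_lt_of_le hp with hp0 | hp0
  · have hq1 : q = 1 := by linarith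
    simp [← hp0, hq1]
  rcases eq_or_lt_of_le hq with hq0 | hq0
  · have hp1 : p = 1 := by linarith
    simp [← hq0, hp1]
  simp only [smul_eq_mul]
  set X := ∑ i, φ x i with hX
  set Y := ∑ i, φ y i with hY
  have hXpos := hpos x
  have hYpos := hpos y
  have key : ∑ i, φ (p * x + q * y) i ≤ X ^ p * Y ^ q := by
    have h1 : ∀ i, φ (p * x + q * y) i ≤ (p * (φ x i / X) + q * (φ y i / Y)) * (X ^ p * Y ^ q) := by
      intro i
      rw [hmult x y p q hp0 hq0 hpq i]
      have h2 : (φ x i) ^ p * (φ y i) ^ q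
          = ((φ x i / X) ^ p * (φ y i / Y) ^ q) * (X ^ p * Y ^ q) := by
        rw [Real.div_rpow (hnn x i) hXpos.le, Real.div_rpow (hnn y i) hYpos.le]
        field_simp
        rfl
      rw [h2]
      have h3 := Real.geom_mean_le_arith_mean2_weighted hp hq
        (div_nonneg (hnn x i) hXpos.le) (div_nonneg (hnn y i) hYpos.le) hpq
      exact mul_le_mul_of_nonneg_right h3 (by positivity)
    calc ∑ i, φ (p * x + q * y) i
        ≤ ∑ i, (p * (φ x i / X) + q * (φ y i / Y)) * (X ^ p * Y ^ q) :=
          Finset.sum_le_sum fun i _ => h1 i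
      _ = (p * (X / X) + q * (Y / Y)) * (X ^ p * Y ^ q) := by
          rw [← Finset.sum_mul]
          congr 1
          rw [Finset.sum_add_distrib, ← Finset.mul_sum, ← Finset.mul_sum,
            ← Finset.sum_div, ← Finset.sum_div]
      _ = X ^ p * Y ^ q := by
          rw [div_self hXpos.ne', div_self hYpos.ne', mul_one, mul_one, hpq, one_mul]
  calc Real.log (∑ i, φ (p * x + q * y) i) ≤ Real.log (X ^ p * Y ^ q) :=
        Real.log_le_log (hpos _) key
    _ = p * Real.log X + q * Real.log Y := by
        rw [Real.log_mul (by positivity) (by positivity), Real.log_rpow hXpos,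
          Real.log_rpow hYpos]

lemma trace_helper {d : ℕ} (U V : Matrix (Fin d) (Fin d) ℂ) (D E : Fin d → ℂ) :
    (U * Matrix.diagonal D * star U * (V * Matrix.diagonal E * star V)).trace =
    ∑ k, ∑ l, D k * E l * ((star U * V) k l * star ((star U * V) k l)) := by
  have h : U * Matrix.diagonal D * star U * (V * Matrix.diagonal E * star V)
      = (U * (Matrix.diagonal D * (star U * V) * Matrix.diagonal E)) * star V := by
    simp only [Matrix.mul_assoc]
  rw [h, Matrix.trace_mul_comm, ← Matrix.mul_assoc]
  set P := star U * V with hP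
  have h2 : star V * U = star P := by
    rw [hP, Matrix.star_mul, star_star]
  rw [h2, Matrix.trace]
  have h3 : ∀ m k, (Matrix.diagonal D * P * Matrix.diagonal E) k m = D k * P k m * E m := by
    intro m k
    rw [Matrix.mul_diagonal, Matrix.diagonal_mul]
  simp only [Matrix.diag_apply, Matrix.mul_apply, h3, Matrix.star_apply]
  rw [Finset.sum_comm]
  refine Finset.sum_congr rfl fun k _ => Finset.sum_congr rfl fun m _ => ?_
  ring

open Matrix

theorem convexOn_log_trace_rpow {d : ℕ} (hd : 1 ≤ d)
    (ρ σ : Matrix (Fin d) (Fin d) ℂ)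
    (hρ : ρ.PosSemidef) (hσ : σ.PosSemidef)
    (hρ0 : ρ ≠ 0) (hσ0 : σ ≠ 0)
    (hsupp : suppLe ρ σ) :
    ConvexOn ℝ Set.univ
      (fun α : ℝ => Real.log (((mPow ρ α * mPow σ (1 - α)).trace).re)) := by
  have hρ' := hρ.1
  have hσ' := hσ.1
  set U : Matrix (Fin d) (Fin d) ℂ := (hρ'.eigenvectorUnitary : Matrix (Fin d) (Fin d) ℂ) with hU
  set V : Matrix (Fin d) (Fin d) ℂ := (hσ'.eigenvectorUnitary : Matrix (Fin d) (Fin d) ℂ) with hV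
  set a : Fin d → ℝ := hρ'.eigenvalues with ha
  set b : Fin d → ℝ := hσ'.eigenvalues with hb
  set P : Matrix (Fin d) (Fin d) ℂ := star U * V with hPdef
  set φ : ℝ → Fin d × Fin d → ℝ := fun α kl =>
    (if a kl.1 = 0 then 0 else a kl.1 ^ α) *
    (if b kl.2 = 0 then 0 else b kl.2 ^ (1 - α)) * Complex.normSq (P kl.1 kl.2) with hφ
  -- Step A : trace identity
  have main : ∀ α : ℝ, ((mPow ρ α * mPow σ (1 - α)).trace).re = ∑ kl : Fin d × Fin d, φ α kl := by
    intro α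
    have h1 : mPow ρ α = U * Matrix.diagonal
        (fun i => (((if a i = 0 then 0 else a i ^ α) : ℝ) : ℂ)) * star U := by
      rw [mPow, dif_pos hρ']
    have h2 : mPow σ (1 - α) = V * Matrix.diagonal
        (fun i => (((if b i = 0 then 0 else b i ^ (1 - α)) : ℝ) : ℂ)) * star V := by
      rw [mPow, dif_pos hσ']
    rw [h1, h2, trace_helper, Complex.re_sum]
    rw [Fintype.sum_prod_type]
    refine Finset.sum_congr rfl fun k _ => ?_
    rw [Complex.re_sum]
    refine Finset.sum_congr rfl fun l _ => ?_
    rw [hφ]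
    simp only [← hPdef, Complex.star_def, Complex.mul_conj]
    rw [← Complex.ofReal_mul, ← Complex.ofReal_mul, Complex.ofReal_re]
  -- existence of a good pair
  have hex : ∃ kl : Fin d × Fin d, a kl.1 ≠ 0 ∧ b kl.2 ≠ 0 ∧ P kl.1 kl.2 ≠ 0 := by
    -- first find k with a k ≠ 0
    have hk : ∃ k, a k ≠ 0 := by
      by_contra hcon
      push_neg at hcon
      apply hρ0
      have := hρ'.spectral_theorem
      rw [this]
      have : Matrix.diagonal (RCLike.ofReal ∘ hρ'.eigenvalues) = (0 : Matrix (Fin d) (Fin d) ℂ) := by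
        have : (RCLike.ofReal ∘ hρ'.eigenvalues : Fin d → ℂ) = fun _ => 0 := by
          funext i
          simp [← ha, hcon i]
        rw [this, Matrix.diagonal_zero]
      rw [this, map_zero]
    obtain ⟨k, hak⟩ := hk
    -- eigenvector
    set u : Fin d → ℂ := ⇑(hρ'.eigenvectorBasis k) with hu
    have huev : ρ *ᵥ u = (a k : ℂ) • u := by
      have := hρ'.mulVec_eigenvectorBasis k
      rw [← hu] at this
      rw [this]
      funext i
      simp [Complex.real_smul]
      exact Or.inl rfl
    have humem : u ∈ LinearMap.range (Matrix.toLin' ρ) := by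
      refine ⟨((a k : ℂ))⁻¹ • u, ?_⟩
      rw [Matrix.toLin'_apply, Matrix.mulVec_smul, huev, smul_smul,
        inv_mul_cancel₀ (by exact_mod_cast hak), one_smul]
    obtain ⟨x, hx⟩ := hsupp humem
    rw [Matrix.toLin'_apply] at hx
    -- u i = U i k
    have hui : ∀ i, u i = U i k := by
      intro i
      rw [hU, Matrix.IsHermitian.eigenvectorUnitary_apply, hu]
    by_contra hcon
    push_neg at hcon
    have hVu : ∀ l, b l ≠ 0 → P k l = 0 := by
      intro l hbl
      by_contra hPkl
      exact hPkl (hcon (k, l) hak hbl)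
    -- σ *ᵥ u = 0
    have hσu : σ *ᵥ u = 0 := by
      have hsp := hσ'.spectral_theorem
      simp only [Unitary.conjStarAlgAut_apply, Unitary.coe_star] at hsp
      rw [← hV, ← hb] at hsp
      rw [hsp, ← Matrix.mulVec_mulVec, ← Matrix.mulVec_mulVec]
      have hmid : Matrix.diagonal (RCLike.ofReal ∘ b) *ᵥ ((star V) *ᵥ u) = 0 := by
        funext l
        rw [Matrix.mulVec_diagonal]
        rcases eq_or_ne (b l) 0 with h | h
        · simp [h]
        · have hP0 : P k l = 0 := hVu l h
          have hentry : ((star V) *ᵥ u) l = star (P k l) := by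
            rw [hPdef]
            simp only [Matrix.mulVec, dotProduct, Matrix.mul_apply, Matrix.star_apply,
              star_sum, star_mul', star_star]
            refine Finset.sum_congr rfl fun i _ => ?_
            rw [hui i]
            ring
          rw [hentry, hP0, star_zero, mul_zero]
          simp
      rw [hmid, Matrix.mulVec_zero]
    -- contradiction via dot products
    have h1 : dotProduct (star u) u = 1 := by
      have hUU : star U * U = 1 := Matrix.mem_unitaryGroup_iff'.mp hρ'.eigenvectorUnitary.2
      have : dotProduct (star u) u = (star U * U) k k := by
        rw [Matrix.mul_apply, dotProduct]
        refine Finset.sum_congr rfl fun i _ => ?_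
        rw [Matrix.star_apply, Pi.star_apply, hui i]
      rw [this, hUU, Matrix.one_apply_eq]
    have h2 : dotProduct (star u) u = 0 := by
      have hvm : star u ᵥ* σ = 0 := by
        have h3 : star (σ *ᵥ u) = star u ᵥ* σᴴ := Matrix.star_mulVec σ u
        rw [hσu, star_zero, hσ'] at h3
        exact h3.symm
      calc dotProduct (star u) u = dotProduct (star u) (σ *ᵥ x) := by rw [hx]
        _ = dotProduct (star u ᵥ* σ) x := Matrix.dotProduct_mulVec _ _ _
        _ = 0 := by rw [hvm, zero_dotProduct]
    exact one_ne_zero (h1.symm.trans h2)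
  -- nonnegativity of φ
  have hnn : ∀ α i, 0 ≤ φ α i := by
    intro α i
    simp only [hφ]
    have h1 : (0:ℝ) ≤ a i.1 := hρ.eigenvalues_nonneg i.1
    have h2 : (0:ℝ) ≤ b i.2 := hσ.eigenvalues_nonneg i.2
    have h3 : (0:ℝ) ≤ Complex.normSq (P i.1 i.2) := Complex.normSq_nonneg _
    split_ifs <;> positivity
  -- positivity of the sum
  have hpos : ∀ α, 0 < ∑ kl : Fin d × Fin d, φ α kl := by
    intro α
    obtain ⟨kl, hak, hbl, hP⟩ := hex
    refine Finset.sum_pos' (fun i _ => hnn α i) ⟨kl, Finset.mem_univ _, ?_⟩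
    simp only [hφ]
    rw [if_neg hak, if_neg hbl]
    have ha' : 0 < a kl.1 := (hρ.eigenvalues_nonneg kl.1).lt_of_ne (Ne.symm hak)
    have hb' : 0 < b kl.2 := (hσ.eigenvalues_nonneg kl.2).lt_of_ne (Ne.symm hbl)
    have hc' : 0 < Complex.normSq (P kl.1 kl.2) := Complex.normSq_pos.mpr hP
    positivity
  -- multiplicativity
  have hmult : ∀ x y : ℝ, ∀ p q : ℝ, 0 < p → 0 < q → p + q = 1 →
      ∀ i, φ (p * x + q * y) i = (φ x i) ^ p * (φ y i) ^ q := by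
    intro x y p q hp hq hpq i
    obtain ⟨k, l⟩ := i
    simp only [hφ]
    rcases eq_or_ne (a k) 0 with hA | hA
    · simp [hA, Real.zero_rpow hp.ne', Real.zero_rpow hq.ne']
    rcases eq_or_ne (b l) 0 with hB | hB
    · simp [hB, Real.zero_rpow hp.ne', Real.zero_rpow hq.ne']
    rcases eq_or_ne (Complex.normSq (P k l)) 0 with hC | hC
    · simp [hC, Real.zero_rpow hp.ne', Real.zero_rpow hq.ne']
    have ha' : 0 < a k := (hρ.eigenvalues_nonneg k).lt_of_ne (Ne.symm hA)
    have hb' : 0 < b l := (hσ.eigenvalues_nonneg l).lt_of_ne (Ne.symm hB)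
    have hc' : 0 < Complex.normSq (P k l) := (Complex.normSq_nonneg _).lt_of_ne (Ne.symm hC)
    rw [if_neg hA, if_neg hB, if_neg hA, if_neg hB, if_neg hA, if_neg hB]
    have e1 : ∀ t : ℝ, a k ^ t * b l ^ (1 - t) * Complex.normSq (P k l)
        = Real.exp (Real.log (a k) * t + Real.log (b l) * (1 - t)
            + Real.log (Complex.normSq (P k l))) := by
      intro t
      rw [Real.exp_add, Real.exp_add, ← Real.rpow_def_of_pos ha', ← Real.rpow_def_of_pos hb',
        Real.exp_log hc']
    rw [e1, e1, e1, ← Real.exp_mul, ← Real.exp_mul, ← Real.exp_add, Real.exp_eq_exp]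
    linear_combination (-(Real.log (b l) + Real.log (Complex.normSq (P k l)))) * hpq
  -- conclude
  have hfun : (fun α : ℝ => Real.log (((mPow ρ α * mPow σ (1 - α)).trace).re))
      = fun α => Real.log (∑ kl : Fin d × Fin d, φ α kl) :=
    funext fun α => by rw [main α]
  rw [hfun]
  exact key_convex φ hnn hmult hpos
end

section
/- Let ρ and σ be states (positive semidefinite d×d complex matrices of trace 1) with supp ρ ⊆ supp σ. Define D_α(ρ‖σ) := (1/(α−1))·log Tr(ρ^α σ^{1−α}) for α ∈ (0,∞)\{1}, and D_1(ρ‖σ) := Tr(ρ(log ρ − log σ)). Then α ↦ D_α(ρ‖σ) is monotone increasing on (0,∞): for all 0 < α < β one has D_α(ρ‖σ) ≤ D_β(ρ‖σ). -/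
open scoped BigOperators ComplexOrder

/-- The old (Petz-type) Rényi α-divergence of states, with the Umegaki relative
entropy at α = 1. -/
noncomputable def DoldFull {d : ℕ} (ρ σ : Matrix (Fin d) (Fin d) ℂ) (α : ℝ) : ℝ :=
  if α = 1 then ((ρ * (mLog ρ - mLog σ)).trace).re
  else (α - 1)⁻¹ * Real.log (((mPow ρ α * mPow σ (1 - α)).trace).re)

open Matrix in
lemma renyi_classical_mono {ι : Type*} (T : Finset ι) (w r : ι → ℝ)
    (hw : ∀ x ∈ T, 0 < w x) (hw1 : ∑ x ∈ T, w x = 1)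
    (hr : ∀ x ∈ T, 0 < r x) {t s : ℝ} (hts : t < s) :
    (if t = 0 then ∑ x ∈ T, w x * Real.log (r x)
      else t⁻¹ * Real.log (∑ x ∈ T, w x * r x ^ t))
    ≤ (if s = 0 then ∑ x ∈ T, w x * Real.log (r x)
      else s⁻¹ * Real.log (∑ x ∈ T, w x * r x ^ s)) := by
  have hT : T.Nonempty := by
    rcases T.eq_empty_or_nonempty with h | h
    · exfalso; rw [h] at hw1; simp at hw1
    · exact h
  set KL := ∑ x ∈ T, w x * Real.log (r x) with hKL
  have hS : ∀ u : ℝ, 0 < ∑ x ∈ T, w x * r x ^ u := fun u =>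
    Finset.sum_pos (fun x hx => mul_pos (hw x hx) (Real.rpow_pos_of_pos (hr x hx) u)) hT
  have jensen : ∀ u : ℝ, u * KL ≤ Real.log (∑ x ∈ T, w x * r x ^ u) := by
    intro u
    have hcc := (StrictConcaveOn.concaveOn strictConcaveOn_log_Ioi).le_map_sum
      (fun x hx => (hw x hx).le) hw1 (p := fun x => r x ^ u)
      (fun x hx => Set.mem_Ioi.mpr (Real.rpow_pos_of_pos (hr x hx) u))
    simp only [smul_eq_mul] at hcc
    have h1 : ∑ x ∈ T, w x * Real.log (r x ^ u) = u * KL := by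
      rw [hKL, Finset.mul_sum]
      exact Finset.sum_congr rfl (fun x hx => by rw [Real.log_rpow (hr x hx)]; ring)
    rw [← h1]; exact hcc
  have cross : ∀ u v : ℝ, v ≠ 0 → 1 ≤ u / v →
      (∑ x ∈ T, w x * r x ^ v) ^ (u / v) ≤ ∑ x ∈ T, w x * r x ^ u := by
    intro u v hv h1
    have h2 := Real.rpow_arith_mean_le_arith_mean_rpow T w (fun x => r x ^ v)
      (fun x hx => (hw x hx).le) hw1
      (fun x hx => (Real.rpow_pos_of_pos (hr x hx) v).le) h1
    refine h2.trans_eq (Finset.sum_congr rfl fun x hx => ?_)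
    rw [← Real.rpow_mul (hr x hx).le, mul_comm v (u / v), div_mul_cancel₀ u hv]
  have crossLog : ∀ u v : ℝ, v ≠ 0 → 1 ≤ u / v →
      (u / v) * Real.log (∑ x ∈ T, w x * r x ^ v) ≤
        Real.log (∑ x ∈ T, w x * r x ^ u) := by
    intro u v hv h1
    have := Real.log_le_log (Real.rpow_pos_of_pos (hS v) _) (cross u v hv h1)
    rwa [Real.log_rpow (hS v)] at this
  have neg_le_KL : ∀ u : ℝ, u < 0 → u⁻¹ * Real.log (∑ x ∈ T, w x * r x ^ u) ≤ KL := by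
    intro u hu
    have h := mul_le_mul_of_nonpos_left (jensen u) (inv_nonpos.mpr hu.le)
    rwa [inv_mul_cancel_left₀ hu.ne] at h
  have KL_le_pos : ∀ u : ℝ, 0 < u → KL ≤ u⁻¹ * Real.log (∑ x ∈ T, w x * r x ^ u) := by
    intro u hu
    have h := mul_le_mul_of_nonneg_left (jensen u) (inv_nonneg.mpr hu.le)
    rwa [inv_mul_cancel_left₀ hu.ne'] at h
  rcases lt_trichotomy t 0 with ht | ht | ht
  · rw [if_neg ht.ne]
    rcases lt_trichotomy s 0 with hs | hs | hs
    · rw [if_neg hs.ne]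
      have h1 : (1 : ℝ) ≤ t / s := by
        rw [le_div_iff_of_neg hs]; linarith
      have h2 := crossLog t s hs.ne h1
      have h3 := mul_le_mul_of_nonpos_left h2 (inv_nonpos.mpr ht.le)
      calc t⁻¹ * Real.log (∑ x ∈ T, w x * r x ^ t)
          ≤ t⁻¹ * (t / s * Real.log (∑ x ∈ T, w x * r x ^ s)) := h3
        _ = s⁻¹ * Real.log (∑ x ∈ T, w x * r x ^ s) := by
            rw [show t⁻¹ * (t / s * Real.log (∑ x ∈ T, w x * r x ^ s))
                = (t⁻¹ * t) * (s⁻¹ * Real.log (∑ x ∈ T, w x * r x ^ s)) by ring,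
              inv_mul_cancel₀ ht.ne, one_mul]
    · rw [if_pos hs]; exact neg_le_KL t ht
    · rw [if_neg hs.ne']; exact (neg_le_KL t ht).trans (KL_le_pos s hs)
  · subst ht
    rw [if_pos rfl, if_neg hts.ne']
    exact KL_le_pos s hts
  · have hs : 0 < s := ht.trans hts
    rw [if_neg ht.ne', if_neg hs.ne']
    have h1 : (1 : ℝ) ≤ s / t := by rw [le_div_iff₀ ht]; linarith
    have h2 := crossLog s t ht.ne' h1
    have h3 := mul_le_mul_of_nonneg_left h2 (inv_nonneg.mpr hs.le)
    calc t⁻¹ * Real.log (∑ x ∈ T, w x * r x ^ t)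
        = s⁻¹ * (s / t * Real.log (∑ x ∈ T, w x * r x ^ t)) := by
          rw [show s⁻¹ * (s / t * Real.log (∑ x ∈ T, w x * r x ^ t))
              = (s⁻¹ * s) * (t⁻¹ * Real.log (∑ x ∈ T, w x * r x ^ t)) by ring,
            inv_mul_cancel₀ hs.ne', one_mul]
      _ ≤ s⁻¹ * Real.log (∑ x ∈ T, w x * r x ^ s) := h3

lemma trace_conj_pair {d : ℕ} (U V : Matrix (Fin d) (Fin d) ℂ)
    (hU : U * star U = 1) (hU' : star U * U = 1) (a b : Fin d → ℂ) :
    (U * Matrix.diagonal a * star U * (V * Matrix.diagonal b * star V)).trace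
    = ∑ i, ∑ j, a i * b j *
        ((star U * V) i j * star ((star U * V) i j)) := by
  have hX : U * Matrix.diagonal a * star U * (V * Matrix.diagonal b * star V)
      = U * (Matrix.diagonal a * (star U * V) * Matrix.diagonal b *
          star (star U * V)) * star U := by
    simp only [star_mul, star_star, Matrix.mul_assoc, hU, Matrix.mul_one]
  rw [hX, Matrix.trace_mul_cycle, ← Matrix.mul_assoc, hU', Matrix.one_mul]
  rw [Matrix.trace]
  have key : ∀ i : Fin d,
      (Matrix.diagonal a * (star U * V) * Matrix.diagonal b * star (star U * V)).diag i
      = ∑ j, a i * b j * ((star U * V) i j * star ((star U * V) i j)) := by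
    intro i
    rw [Matrix.diag_apply, Matrix.mul_apply]
    refine Finset.sum_congr rfl fun j _ => ?_
    rw [Matrix.mul_diagonal, Matrix.diagonal_mul, Matrix.star_apply]
    ring
  rw [Finset.sum_congr rfl fun i _ => key i]

lemma trace_re_pair {d : ℕ} (U V : Matrix (Fin d) (Fin d) ℂ)
    (hU : U * star U = 1) (hU' : star U * U = 1) (a b : Fin d → ℝ) :
    ((U * Matrix.diagonal (fun i => ((a i : ℝ) : ℂ)) * star U *
      (V * Matrix.diagonal (fun j => ((b j : ℝ) : ℂ)) * star V)).trace).re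
    = ∑ i, ∑ j, a i * b j * Complex.normSq ((star U * V) i j) := by
  rw [trace_conj_pair U V hU hU']
  have h2 : (∑ i, ∑ j, ((a i : ℂ) * (b j : ℂ) *
        ((star U * V) i j * star ((star U * V) i j))))
      = ((∑ i, ∑ j, a i * b j * Complex.normSq ((star U * V) i j) : ℝ) : ℂ) := by
    push_cast
    refine Finset.sum_congr rfl fun i _ => Finset.sum_congr rfl fun j _ => ?_
    rw [Complex.star_def, Complex.mul_conj]
  rw [h2, Complex.ofReal_re]

open Matrix in
theorem Dold_monotone {d : ℕ} (hd : 1 ≤ d)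
    (ρ σ : Matrix (Fin d) (Fin d) ℂ)
    (hρ : ρ.PosSemidef) (hσ : σ.PosSemidef)
    (hρ1 : ρ.trace = 1) (hσ1 : σ.trace = 1)
    (hsupp : suppLe ρ σ) :
    ∀ α β : ℝ, 0 < α → α < β → DoldFull ρ σ α ≤ DoldFull ρ σ β := by
  intro α β hα hαβ
  classical
  have hρH : ρ.IsHermitian := hρ.1
  have hσH : σ.IsHermitian := hσ.1
  set U : Matrix (Fin d) (Fin d) ℂ :=
    (hρH.eigenvectorUnitary : Matrix (Fin d) (Fin d) ℂ) with hU_def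
  set V : Matrix (Fin d) (Fin d) ℂ :=
    (hσH.eigenvectorUnitary : Matrix (Fin d) (Fin d) ℂ) with hV_def
  set p : Fin d → ℝ := hρH.eigenvalues with hp_def
  set q : Fin d → ℝ := hσH.eigenvalues with hq_def
  have hUU : U * star U = 1 := Matrix.mem_unitaryGroup_iff.mp hρH.eigenvectorUnitary.2
  have hU'U : star U * U = 1 := Matrix.mem_unitaryGroup_iff'.mp hρH.eigenvectorUnitary.2
  have hVV : V * star V = 1 := Matrix.mem_unitaryGroup_iff.mp hσH.eigenvectorUnitary.2
  have hV'V : star V * V = 1 := Matrix.mem_unitaryGroup_iff'.mp hσH.eigenvectorUnitary.2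
  set M : Matrix (Fin d) (Fin d) ℂ := star U * V with hM_def
  have hMM : M * star M = 1 := by
    rw [hM_def, StarMul.star_mul, star_star]
    simp only [Matrix.mul_assoc]
    rw [← Matrix.mul_assoc V, hVV, Matrix.one_mul, hU'U]
  have hM'M : star M * M = 1 := by
    rw [hM_def, StarMul.star_mul, star_star]
    simp only [Matrix.mul_assoc]
    rw [← Matrix.mul_assoc U, hUU, Matrix.one_mul, hV'V]
  set w : Fin d × Fin d → ℝ := fun x => Complex.normSq (M x.1 x.2) * p x.1 with hw_def
  set r : Fin d × Fin d → ℝ := fun x => p x.1 / q x.2 with hr_def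
  set T : Finset (Fin d × Fin d) := Finset.univ.filter (fun x => 0 < w x) with hT_def
  have hpnn : ∀ i, 0 ≤ p i := fun i => hρ.eigenvalues_nonneg i
  have hqnn : ∀ j, 0 ≤ q j := fun j => hσ.eigenvalues_nonneg j
  have hwnn : ∀ x, 0 ≤ w x := fun x =>
    mul_nonneg (Complex.normSq_nonneg _) (hpnn x.1)
  have hTmem : ∀ x, x ∈ T ↔ 0 < w x := by intro x; simp [hT_def]
  have hT_p : ∀ x ∈ T, 0 < p x.1 ∧ 0 < Complex.normSq (M x.1 x.2) := by
    intro x hx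
    have hwx := (hTmem x).1 hx
    have hp0 : p x.1 ≠ 0 := by
      intro h; rw [hw_def] at hwx; simp only [h, mul_zero] at hwx; exact lt_irrefl 0 hwx
    have hc0 : Complex.normSq (M x.1 x.2) ≠ 0 := by
      intro h; rw [hw_def] at hwx; simp only [h, zero_mul] at hwx; exact lt_irrefl 0 hwx
    exact ⟨(hpnn _).lt_of_ne (Ne.symm hp0), (Complex.normSq_nonneg _).lt_of_ne (Ne.symm hc0)⟩
  have hsuppM : ∀ i j, p i ≠ 0 → q j = 0 → M i j = 0 := by
    intro i j hpi hqj
    have hu : ρ *ᵥ ⇑(hρH.eigenvectorBasis i) = (p i : ℂ) • ⇑(hρH.eigenvectorBasis i) := by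
      rw [hρH.mulVec_eigenvectorBasis]
      ext k
      simp [Complex.real_smul, hp_def]
    have hmem : (⇑(hρH.eigenvectorBasis i) : Fin d → ℂ) ∈
        LinearMap.range (Matrix.toLin' ρ) := by
      refine ⟨((p i : ℂ))⁻¹ • ⇑(hρH.eigenvectorBasis i), ?_⟩
      rw [Matrix.toLin'_apply, Matrix.mulVec_smul, hu, smul_smul,
        inv_mul_cancel₀ (Complex.ofReal_ne_zero.mpr hpi), one_smul]
    obtain ⟨y, hy⟩ := hsupp hmem
    have hv : σ *ᵥ ⇑(hσH.eigenvectorBasis j) = 0 := by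
      rw [hσH.mulVec_eigenvectorBasis, ← hq_def, hqj, zero_smul]
    have hMij : M i j =
        dotProduct (star (⇑(hρH.eigenvectorBasis i) : Fin d → ℂ))
          ⇑(hσH.eigenvectorBasis j) := by
      simp [hM_def, hU_def, hV_def, Matrix.mul_apply, Matrix.star_apply,
        Matrix.IsHermitian.eigenvectorUnitary_apply, dotProduct, Pi.star_apply]
    rw [hMij, ← hy, Matrix.toLin'_apply, Matrix.star_mulVec, ← Matrix.dotProduct_mulVec,
      show σᴴ = σ from hσH, hv, dotProduct_zero]
  have hT_q : ∀ x ∈ T, 0 < q x.2 := by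
    intro x hx
    obtain ⟨hp1, hc1⟩ := hT_p x hx
    have hM0 : M x.1 x.2 ≠ 0 := by
      intro h; rw [h] at hc1; simp at hc1
    have hq0 : q x.2 ≠ 0 := fun h => hM0 (hsuppM x.1 x.2 hp1.ne' h)
    exact (hqnn _).lt_of_ne (Ne.symm hq0)
  have hr_pos : ∀ x ∈ T, 0 < r x := fun x hx =>
    div_pos (hT_p x hx).1 (hT_q x hx)
  have hw_pos : ∀ x ∈ T, 0 < w x := fun x hx => (hTmem x).1 hx
  have hrow : ∀ i, ∑ j, Complex.normSq (M i j) = 1 := by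
    intro i
    have h1 : (M * star M) i i = 1 := by rw [hMM]; simp [Matrix.one_apply]
    rw [Matrix.mul_apply] at h1
    have h2 : ∑ j, (Complex.normSq (M i j) : ℂ) = 1 := by
      rw [← h1]
      refine Finset.sum_congr rfl fun j _ => ?_
      rw [Matrix.star_apply, Complex.star_def, Complex.mul_conj]
    exact_mod_cast h2
  have hptr : ∑ i, p i = 1 := by
    have h1 : ρ.trace = ∑ i, (p i : ℂ) := by
      conv_lhs => rw [hρH.spectral_theorem]
      rw [Unitary.conjStarAlgAut_apply, Matrix.trace_mul_cycle, hU'U, Matrix.one_mul, Matrix.trace_diagonal]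
      rfl
    rw [hρ1] at h1
    exact_mod_cast h1.symm
  have hw1 : ∑ x ∈ T, w x = 1 := by
    have hfull : ∑ x ∈ T, w x = ∑ x : Fin d × Fin d, w x := by
      rw [hT_def]
      exact Finset.sum_filter_of_ne (fun x _ h => (hwnn x).lt_of_ne (Ne.symm h))
    rw [hfull, Fintype.sum_prod_type]
    have hinner : ∀ i, ∑ j, w (i, j) = p i := by
      intro i
      simp only [hw_def]
      rw [← Finset.sum_mul, hrow i, one_mul]
    rw [Finset.sum_congr rfl fun i _ => hinner i, hptr]
  have E1 : ∀ γ : ℝ, ((mPow ρ γ * mPow σ (1 - γ)).trace).re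
      = ∑ x ∈ T, w x * r x ^ (γ - 1) := by
    intro γ
    have h1 : mPow ρ γ = U * Matrix.diagonal
        (fun i => (((if p i = 0 then 0 else p i ^ γ) : ℝ) : ℂ)) * star U := by
      unfold mPow; rw [dif_pos hρH]
    have h2 : mPow σ (1 - γ) = V * Matrix.diagonal
        (fun j => (((if q j = 0 then 0 else q j ^ (1 - γ)) : ℝ) : ℂ)) * star V := by
      unfold mPow; rw [dif_pos hσH]
    rw [h1, h2, trace_re_pair U V hUU hU'U]
    rw [← Finset.sum_product', Finset.univ_product_univ]
    rw [← Finset.sum_subset (Finset.subset_univ T) ?van]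
    case van =>
      intro x _ hx
      have hw0 : w x = 0 := by
        by_contra h
        exact hx ((hTmem x).2 ((hwnn x).lt_of_ne (Ne.symm h)))
      rw [hw_def] at hw0
      rcases mul_eq_zero.mp hw0 with h | h
      · simp [h, show (star U * V) x.1 x.2 = 0 from Complex.normSq_eq_zero.mp h]
      · simp [h]
    refine Finset.sum_congr rfl fun x hx => ?_
    obtain ⟨hp1, hc1⟩ := hT_p x hx
    have hq1 := hT_q x hx
    rw [if_neg hp1.ne', if_neg hq1.ne']
    simp only [hw_def, hr_def]
    have e1 : p x.1 ^ γ = p x.1 ^ (γ - 1) * p x.1 := by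
      rw [← Real.rpow_add_one hp1.ne' (γ - 1)]; norm_num
    have e2 : q x.2 ^ (1 - γ) = (q x.2 ^ (γ - 1))⁻¹ := by
      rw [← Real.rpow_neg hq1.le, neg_sub]
    rw [e1, e2, Real.div_rpow hp1.le hq1.le]
    have hqne : q x.2 ^ (γ - 1) ≠ 0 := (Real.rpow_pos_of_pos hq1 _).ne'
    field_simp
    ring
  have E2 : ((ρ * (mLog ρ - mLog σ)).trace).re = ∑ x ∈ T, w x * Real.log (r x) := by
    have hL1 : mLog ρ = U * Matrix.diagonal
        (fun i => ((Real.log (p i) : ℝ) : ℂ)) * star U := by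
      unfold mLog; rw [dif_pos hρH]
    have hL2 : mLog σ = V * Matrix.diagonal
        (fun j => ((Real.log (q j) : ℝ) : ℂ)) * star V := by
      unfold mLog; rw [dif_pos hσH]
    have hρeq : ρ = U * Matrix.diagonal (fun i => ((p i : ℝ) : ℂ)) * star U := by
      conv_lhs => rw [hρH.spectral_theorem]
      rfl
    rw [mul_sub, Matrix.trace_sub, Complex.sub_re]
    nth_rewrite 1 [hρeq]
    nth_rewrite 2 [hρeq]
    rw [hL1, hL2, trace_re_pair U U hUU hU'U, trace_re_pair U V hUU hU'U]
    have hdiag : ∀ i j : Fin d, Complex.normSq ((star U * U) i j)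
        = if i = j then 1 else 0 := by
      intro i j; rw [hU'U, Matrix.one_apply]
      split <;> simp
    have hS1 : ∑ i, ∑ j, p i * Real.log (p j) * Complex.normSq ((star U * U) i j)
        = ∑ i, p i * Real.log (p i) := by
      refine Finset.sum_congr rfl fun i _ => ?_
      simp only [hdiag, mul_ite, mul_one, mul_zero]
      rw [Finset.sum_ite_eq]
      simp
    rw [hS1]
    have h1 : ∑ i, p i * Real.log (p i)
        = ∑ i, ∑ j, p i * Real.log (p i) * Complex.normSq (M i j) := by
      refine Finset.sum_congr rfl fun i _ => ?_
      rw [← Finset.mul_sum, hrow i, mul_one]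
    rw [h1]
    have hcomb : ∑ i, ∑ j, p i * Real.log (p i) * Complex.normSq (M i j)
        - ∑ i, ∑ j, p i * Real.log (q j) * Complex.normSq (M i j)
        = ∑ i, ∑ j, (Complex.normSq (M i j) * p i) * (Real.log (p i) - Real.log (q j)) := by
      rw [← Finset.sum_sub_distrib]
      refine Finset.sum_congr rfl fun i _ => ?_
      rw [← Finset.sum_sub_distrib]
      exact Finset.sum_congr rfl fun j _ => by ring
    rw [hcomb]
    rw [← Finset.sum_product', Finset.univ_product_univ]
    rw [← Finset.sum_subset (Finset.subset_univ T) ?van2]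
    case van2 =>
      intro x _ hx
      have hw0 : w x = 0 := by
        by_contra h
        exact hx ((hTmem x).2 ((hwnn x).lt_of_ne (Ne.symm h)))
      rw [hw_def] at hw0
      rcases mul_eq_zero.mp hw0 with h | h
      · simp [h]
      · simp [h]
    refine Finset.sum_congr rfl fun x hx => ?_
    obtain ⟨hp1, hc1⟩ := hT_p x hx
    have hq1 := hT_q x hx
    simp only [hw_def, hr_def]
    rw [Real.log_div hp1.ne' hq1.ne']
  have key := renyi_classical_mono T w r hw_pos hw1 hr_pos
    (show α - 1 < β - 1 by linarith)
  have hD : ∀ γ : ℝ, DoldFull ρ σ γ =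
      (if γ - 1 = 0 then ∑ x ∈ T, w x * Real.log (r x)
        else (γ - 1)⁻¹ * Real.log (∑ x ∈ T, w x * r x ^ (γ - 1))) := by
    intro γ
    by_cases h : γ = 1
    · subst h
      unfold DoldFull
      rw [if_pos rfl, if_pos (by ring : (1:ℝ) - 1 = 0), E2]
    · unfold DoldFull
      rw [if_neg h, if_neg (sub_ne_zero.mpr h), E1 γ]
  rw [hD α, hD β]
  exact key
end

section
/- Let ρ and σ be states (positive semidefinite d×d complex matrices of trace 1) with supp ρ ⊆ supp σ. Then lim_{α→1, α≠1} (1/(α−1))·log Tr(ρ^α σ^{1−α}) = Tr(ρ(log ρ − log σ)), i.e., the old Rényi α-divergence converges to the Umegaki relative entropy as α → 1. -/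
open scoped BigOperators ComplexOrder

lemma traceFormula {d : ℕ} (U V : Matrix (Fin d) (Fin d) ℂ) (p q : Fin d → ℝ) :
    ((U * Matrix.diagonal (fun i => ((p i : ℝ) : ℂ)) * star U) *
      (V * Matrix.diagonal (fun j => ((q j : ℝ) : ℂ)) * star V)).trace
    = ((∑ i, ∑ j, p i * q j * Complex.normSq ((star U * V) i j) : ℝ) : ℂ) := by
  set A := star U * V with hA
  have e1 : (U * Matrix.diagonal (fun i => ((p i : ℝ) : ℂ)) * star U) *
      (V * Matrix.diagonal (fun j => ((q j : ℝ) : ℂ)) * star V)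
      = U * ((Matrix.diagonal (fun i => ((p i : ℝ) : ℂ)) *
          (star U * (V * (Matrix.diagonal (fun j => ((q j : ℝ) : ℂ)) * star V))))) := by
    simp only [Matrix.mul_assoc]
  rw [e1, Matrix.trace_mul_comm]
  have e2 : (Matrix.diagonal (fun i => ((p i : ℝ) : ℂ)) *
      (star U * (V * (Matrix.diagonal (fun j => ((q j : ℝ) : ℂ)) * star V)))) * U
      = Matrix.diagonal (fun i => ((p i : ℝ) : ℂ)) *
        (A * (Matrix.diagonal (fun j => ((q j : ℝ) : ℂ)) * star A)) := by
    rw [hA, star_mul, star_star]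
    simp only [Matrix.mul_assoc]
  rw [e2]
  rw [Matrix.trace]
  push_cast
  apply Finset.sum_congr rfl
  intro i _
  rw [Matrix.diag_apply, Matrix.diagonal_mul, Matrix.mul_apply, Finset.mul_sum]
  apply Finset.sum_congr rfl
  intro j _
  rw [Matrix.diagonal_mul, Matrix.star_apply]
  rw [show ((p i :ℂ) * (A i j * ((q j : ℂ) * star (A i j)))) = (p i : ℂ) * (q j : ℂ) * (A i j * star (A i j)) by ring]
  rw [Complex.star_def, Complex.mul_conj]

theorem Dold_tendsto_relativeEntropy {d : ℕ} (hd : 1 ≤ d)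
    (ρ σ : Matrix (Fin d) (Fin d) ℂ)
    (hρ : ρ.PosSemidef) (hσ : σ.PosSemidef)
    (hρ1 : ρ.trace = 1) (hσ1 : σ.trace = 1)
    (hsupp : suppLe ρ σ) :
    Filter.Tendsto
      (fun α : ℝ => (α - 1)⁻¹ * Real.log (((mPow ρ α * mPow σ (1 - α)).trace).re))
      (nhdsWithin 1 {(1 : ℝ)}ᶜ)
      (nhds (((ρ * (mLog ρ - mLog σ)).trace).re)) := by
  classical
  have hρ' : ρ.IsHermitian := hρ.1
  have hσ' : σ.IsHermitian := hσ.1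
  set U : Matrix (Fin d) (Fin d) ℂ := (hρ'.eigenvectorUnitary : Matrix (Fin d) (Fin d) ℂ) with hUdef
  set V : Matrix (Fin d) (Fin d) ℂ := (hσ'.eigenvectorUnitary : Matrix (Fin d) (Fin d) ℂ) with hVdef
  set a : Fin d → ℝ := hρ'.eigenvalues with hadef
  set b : Fin d → ℝ := hσ'.eigenvalues with hbdef
  set c : Fin d → Fin d → ℝ := fun i j => Complex.normSq ((star U * V) i j) with hcdef
  have ha0 : ∀ i, 0 ≤ a i := fun i => hρ.eigenvalues_nonneg i
  have hb0 : ∀ j, 0 ≤ b j := fun j => hσ.eigenvalues_nonneg j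
  have hUU : star U * U = 1 := Matrix.mem_unitaryGroup_iff'.mp hρ'.eigenvectorUnitary.2
  have hVV : V * star V = 1 := Matrix.mem_unitaryGroup_iff.mp hσ'.eigenvectorUnitary.2
  -- support condition
  have hc0 : ∀ i j, a i ≠ 0 → b j = 0 → c i j = 0 := by
    intro i j hai hbj
    have hW : ((star U * V) i j) = 0 := by
      set u : Fin d → ℂ := ⇑(hρ'.eigenvectorBasis i) with hu
      set v : Fin d → ℂ := ⇑(hσ'.eigenvectorBasis j) with hv
      have hmem : u ∈ LinearMap.range (Matrix.toLin' σ) := by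
        apply hsupp
        refine ⟨(a i)⁻¹ • u, ?_⟩
        rw [Matrix.toLin'_apply, Matrix.mulVec_smul]
        rw [show ρ.mulVec u = a i • u from hρ'.mulVec_eigenvectorBasis i]
        rw [smul_smul, inv_mul_cancel₀ hai, one_smul]
      obtain ⟨w, hw⟩ := hmem
      rw [Matrix.toLin'_apply] at hw
      have hv0 : σ.mulVec v = 0 := by
        rw [show σ.mulVec v = b j • v from hσ'.mulVec_eigenvectorBasis j, hbj, zero_smul]
      have hdot : dotProduct (star u) v = 0 := by
        rw [← hw, Matrix.star_mulVec, ← Matrix.dotProduct_mulVec, hσ'.eq, hv0,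
          dotProduct_zero]
      rw [← hdot]
      simp [Matrix.mul_apply, dotProduct, hu, hv, Matrix.star_apply, hUdef, hVdef]
    rw [hcdef]
    simp [hW]
  -- rows of |W|² sum to 1
  have hrow : ∀ i, ∑ j, c i j = 1 := by
    intro i
    have hWW : (star U * V) * star (star U * V) = 1 := by
      rw [star_mul, star_star]
      rw [show star U * V * (star V * U) = star U * (V * star V) * U by
        simp only [Matrix.mul_assoc], hVV, Matrix.mul_one, hUU]
    have h2 : ((star U * V) * star (star U * V)) i i = ((∑ j, c i j : ℝ) : ℂ) := by
      rw [Matrix.mul_apply]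
      push_cast
      apply Finset.sum_congr rfl
      intro j _
      simp only [Matrix.star_apply]
      rw [Complex.star_def, Complex.mul_conj, hcdef]
    rw [hWW] at h2
    have : ((1 : Matrix (Fin d) (Fin d) ℂ) i i) = 1 := by simp
    rw [this] at h2
    exact_mod_cast h2.symm
  -- trace of rho is sum of eigenvalues
  have hsa : ∑ i, a i = 1 := by
    have htr : ρ.trace = ((∑ i, a i : ℝ) : ℂ) := by
      conv_lhs => rw [hρ'.spectral_theorem, Unitary.conjStarAlgAut_apply]
      rw [Matrix.trace_mul_cycle, hUU, Matrix.one_mul, Matrix.trace_diagonal]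
      push_cast
      rfl
    rw [hρ1] at htr
    exact_mod_cast htr.symm
  -- the trace as an explicit sum
  have htr : ∀ α : ℝ, ((mPow ρ α * mPow σ (1 - α)).trace)
      = ((∑ i, ∑ j, (if a i = 0 then 0 else a i ^ α) *
          (if b j = 0 then 0 else b j ^ (1-α)) * c i j : ℝ) : ℂ) := by
    intro α
    rw [mPow, mPow, dif_pos hρ', dif_pos hσ']
    exact traceFormula U V _ _
  -- the summand functions
  set t : Fin d → Fin d → ℝ → ℝ := fun i j α =>
    if a i = 0 ∨ b j = 0 then 0
    else c i j * Real.exp (α * Real.log (a i) + (1-α) * Real.log (b j)) with htdef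
  have hf : ∀ α : ℝ, ((mPow ρ α * mPow σ (1 - α)).trace).re = ∑ i, ∑ j, t i j α := by
    intro α
    rw [htr α, Complex.ofReal_re]
    apply Finset.sum_congr rfl; intro i _
    apply Finset.sum_congr rfl; intro j _
    by_cases hai : a i = 0
    · simp [htdef, hai]
    by_cases hbj : b j = 0
    · simp [htdef, hai, hbj]
    · have hap : 0 < a i := lt_of_le_of_ne (ha0 i) (Ne.symm hai)
      have hbp : 0 < b j := lt_of_le_of_ne (hb0 j) (Ne.symm hbj)
      rw [htdef]
      simp only [hai, hbj, if_false, or_self]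
      rw [Real.rpow_def_of_pos hap, Real.rpow_def_of_pos hbp, ← Real.exp_add]
      rw [show Real.log (a i) * α + Real.log (b j) * (1-α)
        = α * Real.log (a i) + (1-α) * Real.log (b j) by ring]
      ring
  -- derivative of each summand at 1
  have hderiv : ∀ i j, HasDerivAt (t i j)
      (c i j * a i * (Real.log (a i) - Real.log (b j))) 1 := by
    intro i j
    by_cases hai : a i = 0
    · have h0 : t i j = fun _ => 0 := by funext α; simp [htdef, hai]
      rw [h0, hai]
      simpa using hasDerivAt_const (1:ℝ) (0:ℝ)
    by_cases hbj : b j = 0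
    · have hc : c i j = 0 := hc0 i j hai hbj
      have h0 : t i j = fun _ => 0 := by funext α; simp [htdef, hbj]
      rw [h0, hc]
      simpa using hasDerivAt_const (1:ℝ) (0:ℝ)
    · have hap : 0 < a i := lt_of_le_of_ne (ha0 i) (Ne.symm hai)
      have h1 : HasDerivAt (fun α : ℝ => α * Real.log (a i)) (Real.log (a i)) 1 := by
        simpa using (hasDerivAt_id (1:ℝ)).mul_const (Real.log (a i))
      have h2 : HasDerivAt (fun α : ℝ => (1-α) * Real.log (b j)) (-Real.log (b j)) 1 := by
        simpa using ((hasDerivAt_const (1:ℝ) (1:ℝ)).sub (hasDerivAt_id 1)).mul_const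
          (Real.log (b j))
      have hlin : HasDerivAt (fun α : ℝ => α * Real.log (a i) + (1-α) * Real.log (b j))
          (Real.log (a i) - Real.log (b j)) 1 := by
        simpa [sub_eq_add_neg] using h1.fun_add h2
      have hexp := (hlin.exp).const_mul (c i j)
      have heq : t i j = fun α =>
          c i j * Real.exp (α * Real.log (a i) + (1-α) * Real.log (b j)) := by
        funext α
        rw [htdef]
        simp [hai, hbj]
      rw [heq]
      refine hexp.congr_deriv ?_
      rw [show (1:ℝ) * Real.log (a i) + (1-1) * Real.log (b j) = Real.log (a i) by ring,
        Real.exp_log hap]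
      ring
  have hF : HasDerivAt (fun α => ∑ i, ∑ j, t i j α)
      (∑ i, ∑ j, c i j * a i * (Real.log (a i) - Real.log (b j))) 1 :=
    HasDerivAt.fun_sum (fun i _ => HasDerivAt.fun_sum (fun j _ => hderiv i j))
  -- value at 1
  have ht1 : ∀ i j, t i j 1 = c i j * a i := by
    intro i j
    by_cases hai : a i = 0
    · simp [htdef, hai]
    by_cases hbj : b j = 0
    · simp [htdef, hbj, hc0 i j hai hbj]
    · have hap : 0 < a i := lt_of_le_of_ne (ha0 i) (Ne.symm hai)
      rw [htdef]
      simp only [hai, hbj, if_false, or_self]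
      rw [show (1:ℝ) * Real.log (a i) + (1-1) * Real.log (b j) = Real.log (a i) by ring,
        Real.exp_log hap]
  have hF1 : (∑ i, ∑ j, t i j 1) = 1 := by
    simp only [ht1]
    rw [show (∑ i, ∑ j, c i j * a i) = ∑ i, a i by
      apply Finset.sum_congr rfl; intro i _; rw [← Finset.sum_mul, hrow i, one_mul]]
    exact hsa
  -- target value
  have hρspec : ρ = U * Matrix.diagonal (fun i => ((a i : ℝ) : ℂ)) * star U :=
    hρ'.spectral_theorem
  have hmlogρ : mLog ρ = U * Matrix.diagonal (fun i => ((Real.log (a i) : ℝ) : ℂ)) * star U := by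
    rw [mLog, dif_pos hρ']
  have hmlogσ : mLog σ = V * Matrix.diagonal (fun j => ((Real.log (b j) : ℝ) : ℂ)) * star V := by
    rw [mLog, dif_pos hσ']
  have e3 : (ρ * mLog ρ).trace
      = ((∑ i, ∑ j, a i * Real.log (a j) * Complex.normSq ((star U * U) i j) : ℝ) : ℂ) := by
    conv_lhs => rw [hmlogρ, hρspec]
    exact traceFormula U U a (fun j => Real.log (a j))
  have e4 : (ρ * mLog σ).trace = ((∑ i, ∑ j, a i * Real.log (b j) * c i j : ℝ) : ℂ) := by
    conv_lhs => rw [hmlogσ, hρspec]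
    exact traceFormula U V a (fun j => Real.log (b j))
  have hT : ((ρ * (mLog ρ - mLog σ)).trace).re
      = (∑ i, a i * Real.log (a i)) - ∑ i, ∑ j, a i * Real.log (b j) * c i j := by
    rw [Matrix.mul_sub, Matrix.trace_sub, Complex.sub_re, e3, e4,
      Complex.ofReal_re, Complex.ofReal_re, hUU]
    congr 1
    apply Finset.sum_congr rfl
    intro i _
    rw [Finset.sum_eq_single i]
    · simp [Matrix.one_apply]
    · intro j _ hj
      simp [Matrix.one_apply, Ne.symm hj]
    · intro h; exact absurd (Finset.mem_univ i) h
  have hLT : (∑ i, ∑ j, c i j * a i * (Real.log (a i) - Real.log (b j)))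
      = (∑ i, a i * Real.log (a i)) - ∑ i, ∑ j, a i * Real.log (b j) * c i j := by
    have hsplit : ∀ i j, c i j * a i * (Real.log (a i) - Real.log (b j))
        = c i j * (a i * Real.log (a i)) - a i * Real.log (b j) * c i j := by
      intro i j; ring
    simp only [hsplit, Finset.sum_sub_distrib]
    congr 1
    apply Finset.sum_congr rfl
    intro i _
    rw [← Finset.sum_mul, hrow i, one_mul]
  -- wrap up
  have hlog : HasDerivAt (fun α => Real.log (∑ i, ∑ j, t i j α))
      (∑ i, ∑ j, c i j * a i * (Real.log (a i) - Real.log (b j))) 1 := by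
    have h := hF.log (by rw [hF1]; norm_num)
    rwa [hF1, div_one] at h
  have hslope := hasDerivAt_iff_tendsto_slope.mp hlog
  rw [hT, ← hLT]
  refine Filter.Tendsto.congr (fun α => ?_) hslope
  rw [slope_def_field, hF1, Real.log_one, sub_zero, ← hf α, div_eq_inv_mul]
end

section
/- Let ρ and σ be positive semidefinite d×d complex matrices and α ∈ (0,1). Then Tr((ρ^{1/2} σ^{(1−α)/α} ρ^{1/2})^α) ≤ ‖σ‖^{(1−α)²} · (Tr(ρ^α))^{1−α} · (Tr(ρ^α σ^{1−α}))^α, where ‖σ‖ is the operator norm (largest eigenvalue) of σ. -/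
open scoped BigOperators ComplexOrder

/-- The operator norm (largest singular value) of a matrix, via the action on
Euclidean space. -/
noncomputable def opNorm {d : ℕ} (A : Matrix (Fin d) (Fin d) ℂ) : ℝ :=
  ‖Matrix.toEuclideanCLM (𝕜 := ℂ) A‖


namespace AudAux
open Matrix Complex

variable {d : ℕ}

noncomputable def matFun {A : Matrix (Fin d) (Fin d) ℂ} (hA : A.IsHermitian) (g : ℝ → ℝ) :
    Matrix (Fin d) (Fin d) ℂ :=
  (hA.eigenvectorUnitary : Matrix (Fin d) (Fin d) ℂ) *
    Matrix.diagonal (fun i => ((g (hA.eigenvalues i) : ℝ) : ℂ)) *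
    star (hA.eigenvectorUnitary : Matrix (Fin d) (Fin d) ℂ)

variable {A B : Matrix (Fin d) (Fin d) ℂ}

lemma star_mul_self_u (hA : A.IsHermitian) :
    star (hA.eigenvectorUnitary : Matrix (Fin d) (Fin d) ℂ) *
      (hA.eigenvectorUnitary : Matrix (Fin d) (Fin d) ℂ) = 1 :=
  (Matrix.mem_unitaryGroup_iff').mp hA.eigenvectorUnitary.2

lemma mul_star_self_u (hA : A.IsHermitian) :
    (hA.eigenvectorUnitary : Matrix (Fin d) (Fin d) ℂ) *
      star (hA.eigenvectorUnitary : Matrix (Fin d) (Fin d) ℂ) = 1 :=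
  (Matrix.mem_unitaryGroup_iff).mp hA.eigenvectorUnitary.2

lemma matFun_id (hA : A.IsHermitian) : matFun hA (fun x => x) = A := by
  rw [matFun]
  exact (hA.spectral_theorem).symm

lemma trace_matFun (hA : A.IsHermitian) (g : ℝ → ℝ) :
    (matFun hA g).trace = ((∑ j, g (hA.eigenvalues j) : ℝ) : ℂ) := by
  rw [matFun, trace_mul_cycle, star_mul_self_u hA, one_mul, trace_diagonal]
  push_cast
  rfl

lemma matFun_mul (hA : A.IsHermitian) (g h : ℝ → ℝ) :
    matFun hA g * matFun hA h = matFun hA (fun x => g x * h x) := by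
  rw [matFun, matFun, matFun]
  have : ∀ X Y : Matrix (Fin d) (Fin d) ℂ,
      (hA.eigenvectorUnitary : Matrix (Fin d) (Fin d) ℂ) * X *
        star (hA.eigenvectorUnitary : Matrix (Fin d) (Fin d) ℂ) *
        ((hA.eigenvectorUnitary : Matrix (Fin d) (Fin d) ℂ) * Y *
          star (hA.eigenvectorUnitary : Matrix (Fin d) (Fin d) ℂ)) =
      (hA.eigenvectorUnitary : Matrix (Fin d) (Fin d) ℂ) * (X * Y) *
        star (hA.eigenvectorUnitary : Matrix (Fin d) (Fin d) ℂ) := by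
    intro X Y
    calc _ = (hA.eigenvectorUnitary : Matrix (Fin d) (Fin d) ℂ) * (X *
          ((star (hA.eigenvectorUnitary : Matrix (Fin d) (Fin d) ℂ) *
            (hA.eigenvectorUnitary : Matrix (Fin d) (Fin d) ℂ)) * Y)) *
          star (hA.eigenvectorUnitary : Matrix (Fin d) (Fin d) ℂ) := by
          simp only [Matrix.mul_assoc]
      _ = _ := by rw [star_mul_self_u hA, Matrix.one_mul]
  rw [this, Matrix.diagonal_mul_diagonal]
  congr 1
  · congr 1
    funext i
    push_cast
    rfl

lemma matFun_congr (hA : A.IsHermitian) {g h : ℝ → ℝ}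
    (hgh : ∀ j, g (hA.eigenvalues j) = h (hA.eigenvalues j)) :
    matFun hA g = matFun hA h := by
  have : (fun i => ((g (hA.eigenvalues i) : ℝ) : ℂ)) =
      (fun i => ((h (hA.eigenvalues i) : ℝ) : ℂ)) := funext fun i => by rw [hgh]
  rw [matFun, matFun, this]

lemma matFun_isHermitian (hA : A.IsHermitian) (g : ℝ → ℝ) :
    (matFun hA g).IsHermitian := by
  rw [matFun, Matrix.IsHermitian]
  simp only [star_eq_conjTranspose, conjTranspose_mul, conjTranspose_conjTranspose,
    diagonal_conjTranspose]
  rw [Matrix.mul_assoc]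
  congr 1
  congr 1
  funext i
  simp [Pi.star_def, Complex.conj_ofReal]

lemma matFun_posSemidef (hA : A.IsHermitian) (g : ℝ → ℝ)
    (hg : ∀ j, 0 ≤ g (hA.eigenvalues j)) : (matFun hA g).PosSemidef := by
  rw [matFun]
  have hD : (Matrix.diagonal (fun i => ((g (hA.eigenvalues i) : ℝ) : ℂ))).PosSemidef := by
    rw [Matrix.posSemidef_diagonal_iff]
    intro i
    rw [Complex.zero_le_real]
    exact hg i
  simpa only [star_eq_conjTranspose] using hD.mul_mul_conjTranspose_same
    (hA.eigenvectorUnitary : Matrix (Fin d) (Fin d) ℂ)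


-- trace dmd

lemma trace_dmd (g h : Fin d → ℝ) (M : Matrix (Fin d) (Fin d) ℂ) :
    (Matrix.diagonal (fun j => ((g j : ℝ) : ℂ)) * M *
      Matrix.diagonal (fun i => ((h i : ℝ) : ℂ)) * Mᴴ).trace =
    ((∑ j, ∑ i, g j * h i * Complex.normSq (M j i) : ℝ) : ℂ) := by
  rw [Matrix.trace]
  push_cast
  apply Finset.sum_congr rfl
  intro j _
  rw [Matrix.diag]
  rw [Matrix.mul_apply]
  apply Finset.sum_congr rfl
  intro i _
  rw [Matrix.mul_diagonal, Matrix.diagonal_mul, Matrix.conjTranspose_apply]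
  have : (M j i) * star (M j i) = ((Complex.normSq (M j i) : ℝ) : ℂ) := Complex.mul_conj _
  push_cast
  rw [mul_right_comm ((g j : ℂ)) (M j i) ((h i : ℂ)), mul_assoc, this]




example (z : ℂ) : star z * z = ((Complex.normSq z : ℝ) : ℂ) := by
  rw [Complex.star_def, Complex.normSq_eq_conj_mul_self]

lemma sum_normSq_col (M : Matrix (Fin d) (Fin d) ℂ) (hM : Mᴴ * M = 1) (i : Fin d) :
    ∑ j, Complex.normSq (M j i) = 1 := by
  have h0 := congrFun (congrFun hM i) i
  rw [Matrix.mul_apply, Matrix.one_apply_eq] at h0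
  simp only [Matrix.conjTranspose_apply] at h0
  have h1 : ((∑ j, Complex.normSq (M j i) : ℝ) : ℂ) = 1 := by
    push_cast
    rw [← h0]
    apply Finset.sum_congr rfl
    intro j _
    rw [Complex.star_def, Complex.normSq_eq_conj_mul_self]
  exact_mod_cast h1

lemma sum_normSq_row (M : Matrix (Fin d) (Fin d) ℂ) (hM : M * Mᴴ = 1) (j : Fin d) :
    ∑ i, Complex.normSq (M j i) = 1 := by
  have h0 := congrFun (congrFun hM j) j
  rw [Matrix.mul_apply, Matrix.one_apply_eq] at h0
  simp only [Matrix.conjTranspose_apply] at h0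
  have h1 : ((∑ i, Complex.normSq (M j i) : ℝ) : ℂ) = 1 := by
    push_cast
    rw [← h0]
    apply Finset.sum_congr rfl
    intro i _
    rw [Complex.star_def, ← Complex.mul_conj]
  exact_mod_cast h1


lemma trace_pair (hA : A.IsHermitian) (hB : B.IsHermitian) (g h : ℝ → ℝ) :
    (matFun hA g * matFun hB h).trace =
    ((∑ j, ∑ i, g (hA.eigenvalues j) * h (hB.eigenvalues i) *
      Complex.normSq ((star (hA.eigenvectorUnitary : Matrix (Fin d) (Fin d) ℂ) *
        (hB.eigenvectorUnitary : Matrix (Fin d) (Fin d) ℂ)) j i) : ℝ) : ℂ) := by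
  set UA := (hA.eigenvectorUnitary : Matrix (Fin d) (Fin d) ℂ) with hUA
  set UB := (hB.eigenvectorUnitary : Matrix (Fin d) (Fin d) ℂ) with hUB
  set Dg := Matrix.diagonal (fun j => ((g (hA.eigenvalues j) : ℝ) : ℂ)) with hDg
  set Dh := Matrix.diagonal (fun i => ((h (hB.eigenvalues i) : ℝ) : ℂ)) with hDh
  have hMH : (star UA * UB)ᴴ = star UB * UA := by
    simp [star_eq_conjTranspose, conjTranspose_mul]
  have key : matFun hA g * matFun hB h =
      UA * (Dg * (star UA * UB) * Dh * (star UA * UB)ᴴ) * star UA := by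
    rw [hMH, matFun, matFun, ← hUA, ← hUB, ← hDg, ← hDh]
    simp only [Matrix.mul_assoc]
    rw [mul_star_self_u hA, Matrix.mul_one]
  rw [key, trace_mul_cycle, star_mul_self_u hA, one_mul]
  exact trace_dmd (fun j => g (hA.eigenvalues j)) (fun i => h (hB.eigenvalues i)) _

lemma support_vanish {Z : Matrix (Fin d) (Fin d) ℂ} (hA : A.IsHermitian)
    (hZ : Z.IsHermitian) (Bm : Matrix (Fin d) (Fin d) ℂ) (g : ℝ → ℝ)
    (hZdef : Z = matFun hA g * Bm * matFun hA g)
    {j i : Fin d} (haj : g (hA.eigenvalues j) = 0) (hzi : hZ.eigenvalues i ≠ 0) :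
    (star (hA.eigenvectorUnitary : Matrix (Fin d) (Fin d) ℂ) *
      (hZ.eigenvectorUnitary : Matrix (Fin d) (Fin d) ℂ)) j i = 0 := by
  set U := (hA.eigenvectorUnitary : Matrix (Fin d) (Fin d) ℂ) with hU
  set V := (hZ.eigenvectorUnitary : Matrix (Fin d) (Fin d) ℂ) with hV
  have hZV : Z * V = V * Matrix.diagonal (RCLike.ofReal ∘ hZ.eigenvalues) := by
    conv_lhs => rw [hZ.spectral_theorem]
    rw [Unitary.conjStarAlgAut_apply, Matrix.mul_assoc, star_mul_self_u hZ, Matrix.mul_one]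
  have hUS : star U * matFun hA g =
      Matrix.diagonal (fun k => ((g (hA.eigenvalues k) : ℝ) : ℂ)) * star U := by
    rw [matFun, ← hU, ← Matrix.mul_assoc, ← Matrix.mul_assoc, star_mul_self_u hA,
      Matrix.one_mul]
  have E1 : (star U * Z * V) j i =
      (star U * V) j i * ((hZ.eigenvalues i : ℝ) : ℂ) := by
    rw [Matrix.mul_assoc, hZV, ← Matrix.mul_assoc, Matrix.mul_diagonal]
    rfl
  have E2 : (star U * Z * V) j i = 0 := by
    have : star U * Z * V =
        Matrix.diagonal (fun k => ((g (hA.eigenvalues k) : ℝ) : ℂ)) *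
          (star U * (Bm * (matFun hA g * V))) := by
      rw [hZdef, ← Matrix.mul_assoc, ← Matrix.mul_assoc, hUS]
      simp only [Matrix.mul_assoc]
    rw [this, Matrix.diagonal_mul, haj]
    simp
  rw [E2] at E1
  have := E1.symm
  rcases mul_eq_zero.mp this with h | h
  · exact h
  · exact absurd (Complex.ofReal_eq_zero.mp h) hzi

noncomputable def fpow (s x : ℝ) : ℝ := if x = 0 then 0 else x ^ s

lemma fpow_nonneg {s x : ℝ} (hx : 0 ≤ x) : 0 ≤ fpow s x := by
  rw [fpow]; split
  · exact le_rfl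
  · exact Real.rpow_nonneg hx s

lemma fpow_of_pos {s x : ℝ} (hx : 0 < x) : fpow s x = x ^ s := by
  rw [fpow, if_neg hx.ne']

lemma fpow_zero' (s : ℝ) : fpow s 0 = 0 := by rw [fpow, if_pos rfl]

lemma fpow_add {s t x : ℝ} (hx : 0 ≤ x) : fpow s x * fpow t x = fpow (s + t) x := by
  rcases hx.lt_or_eq with h | h
  · rw [fpow_of_pos h, fpow_of_pos h, fpow_of_pos h, ← Real.rpow_add h]
  · rw [← h, fpow_zero', fpow_zero', fpow_zero', mul_zero]

-- tangent line inequality for concave rpow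
lemma tangent {q z t : ℝ} (hq0 : 0 < q) (hq1 : q < 1) (hz : 0 ≤ z) (ht : 0 < t) :
    z ^ q ≤ q * t ^ (q - 1) * z + (1 - q) * t ^ q := by
  have hgm := Real.geom_mean_le_arith_mean2_weighted hq0.le (by linarith) hz ht.le
    (by ring : q + (1 - q) = 1)
  -- z ^ q * t ^ (1 - q) ≤ q * z + (1 - q) * t
  have htq : (0:ℝ) < t ^ (q - 1) := Real.rpow_pos_of_pos ht _
  have h2 := mul_le_mul_of_nonneg_right hgm htq.le
  have e1 : z ^ q * t ^ (1 - q) * t ^ (q - 1) = z ^ q := by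
    rw [mul_assoc, ← Real.rpow_add ht]
    norm_num
  have e2 : (q * z + (1 - q) * t) * t ^ (q - 1) =
      q * t ^ (q - 1) * z + (1 - q) * t ^ q := by
    have : t * t ^ (q - 1) = t ^ q := by
      nth_rewrite 1 [← Real.rpow_one t]
      rw [← Real.rpow_add ht]; norm_num
    calc (q * z + (1 - q) * t) * t ^ (q - 1)
        = q * t ^ (q - 1) * z + (1 - q) * (t * t ^ (q - 1)) := by ring
      _ = _ := by rw [this]
  rw [e1, e2] at h2
  exact h2

-- core Klein-type inequality
lemma core {n : ℕ} (a z : Fin n → ℝ) (C : Fin n → Fin n → ℝ) {q c : ℝ}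
    (hq0 : 0 < q) (hq1 : q < 1) (hc : 0 < c)
    (ha : ∀ j, 0 ≤ a j) (hz : ∀ i, 0 ≤ z i) (hC : ∀ j i, 0 ≤ C j i)
    (hcolsum : ∀ i, ∑ j, C j i = 1) (hrowsum : ∀ j, ∑ i, C j i = 1)
    (hsupp : ∀ j i, a j = 0 → z i ≠ 0 → C j i = 0) :
    ∑ i, fpow q (z i) ≤
      q * c ^ (q - 1) * (∑ j, ∑ i, fpow (q - 1) (a j) * z i * C j i) +
        (1 - q) * c ^ q * (∑ j, fpow q (a j)) := by
  have key : ∀ j i, C j i * fpow q (z i) ≤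
      C j i * (q * c ^ (q - 1) * (fpow (q - 1) (a j) * z i) +
        (1 - q) * c ^ q * fpow q (a j)) := by
    intro j i
    rcases (ha j).lt_or_eq with haj | haj
    · -- a j > 0, use tangent at t = c * a j
      apply mul_le_mul_of_nonneg_left _ (hC j i)
      have ht : 0 < c * a j := mul_pos hc haj
      have := tangent hq0 hq1 (hz i) ht
      have hfz : fpow q (z i) ≤ q * (c * a j) ^ (q - 1) * z i + (1 - q) * (c * a j) ^ q := by
        rcases (hz i).lt_or_eq with hzi | hzi
        · rw [fpow_of_pos hzi]; exact this
        · rw [← hzi, fpow_zero']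
          have h1 : 0 ≤ q * (c * a j) ^ (q - 1) * z i := by
            rw [← hzi]; simp
          have h2 : 0 ≤ (1 - q) * (c * a j) ^ q :=
            mul_nonneg (by linarith) (Real.rpow_nonneg ht.le q)
          linarith
      refine hfz.trans (le_of_eq ?_)
      rw [fpow_of_pos haj, fpow_of_pos haj,
        Real.mul_rpow hc.le (ha j), Real.mul_rpow hc.le (ha j)]
      ring
    · -- a j = 0
      have haj0 : a j = 0 := haj.symm
      rcases eq_or_ne (z i) 0 with hzi | hzi
      · simp [haj0, hzi, fpow_zero']
      · simp [hsupp j i haj0 hzi]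
  calc ∑ i, fpow q (z i) = ∑ i, (∑ j, C j i) * fpow q (z i) := by
        apply Finset.sum_congr rfl; intro i _; rw [hcolsum i, one_mul]
    _ = ∑ j, ∑ i, C j i * fpow q (z i) := by
        rw [Finset.sum_comm]
        apply Finset.sum_congr rfl; intro i _
        rw [Finset.sum_mul]
    _ ≤ ∑ j, ∑ i, C j i * (q * c ^ (q - 1) * (fpow (q - 1) (a j) * z i) +
          (1 - q) * c ^ q * fpow q (a j)) := by
        apply Finset.sum_le_sum; intro j _
        apply Finset.sum_le_sum; intro i _
        exact key j i
    _ = q * c ^ (q - 1) * (∑ j, ∑ i, fpow (q - 1) (a j) * z i * C j i) +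
        (1 - q) * c ^ q * (∑ j, fpow q (a j)) := by
        have expand : ∀ j, (∑ i, C j i * (q * c ^ (q - 1) * (fpow (q - 1) (a j) * z i) +
              (1 - q) * c ^ q * fpow q (a j)))
            = q * c ^ (q - 1) * (∑ i, fpow (q - 1) (a j) * z i * C j i)
              + (1 - q) * c ^ q * fpow q (a j) := by
          intro j
          rw [show (∑ i, C j i * (q * c ^ (q - 1) * (fpow (q - 1) (a j) * z i) +
              (1 - q) * c ^ q * fpow q (a j)))
            = (∑ i, C j i * (q * c ^ (q - 1) * (fpow (q - 1) (a j) * z i)))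
              + ∑ i, C j i * ((1 - q) * c ^ q * fpow q (a j)) by
            rw [← Finset.sum_add_distrib]
            apply Finset.sum_congr rfl; intro i _; ring]
          congr 1
          · rw [Finset.mul_sum]
            apply Finset.sum_congr rfl; intro i _; ring
          · rw [show (∑ i, C j i * ((1 - q) * c ^ q * fpow q (a j)))
                = (∑ i, C j i) * ((1 - q) * c ^ q * fpow q (a j)) by
              rw [Finset.sum_mul], hrowsum j, one_mul]
        calc (∑ j, ∑ i, C j i * (q * c ^ (q - 1) * (fpow (q - 1) (a j) * z i) +
              (1 - q) * c ^ q * fpow q (a j)))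
            = ∑ j, (q * c ^ (q - 1) * (∑ i, fpow (q - 1) (a j) * z i * C j i)
              + (1 - q) * c ^ q * fpow q (a j)) := by
              apply Finset.sum_congr rfl; intro j _; exact expand j
          _ = _ := by
              rw [Finset.sum_add_distrib, ← Finset.mul_sum, ← Finset.mul_sum]

lemma mPow_eq {A : Matrix (Fin d) (Fin d) ℂ} (hA : A.IsHermitian) (s : ℝ) :
    mPow A s = matFun hA (fpow s) := by
  rw [mPow, dif_pos hA]; rfl

lemma matFun_zero {A : Matrix (Fin d) (Fin d) ℂ} (hA : A.IsHermitian) :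
    matFun hA (fun _ => 0) = 0 := by
  rw [matFun]
  simp

lemma M_mul_MH {A B : Matrix (Fin d) (Fin d) ℂ} (hA : A.IsHermitian) (hB : B.IsHermitian) :
    (star (hA.eigenvectorUnitary : Matrix (Fin d) (Fin d) ℂ) *
      (hB.eigenvectorUnitary : Matrix (Fin d) (Fin d) ℂ)) *
    (star (hA.eigenvectorUnitary : Matrix (Fin d) (Fin d) ℂ) *
      (hB.eigenvectorUnitary : Matrix (Fin d) (Fin d) ℂ))ᴴ = 1 := by
  have h : (star (hA.eigenvectorUnitary : Matrix (Fin d) (Fin d) ℂ) *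
      (hB.eigenvectorUnitary : Matrix (Fin d) (Fin d) ℂ))ᴴ =
      star (hB.eigenvectorUnitary : Matrix (Fin d) (Fin d) ℂ) *
        (hA.eigenvectorUnitary : Matrix (Fin d) (Fin d) ℂ) := by
    simp [star_eq_conjTranspose, conjTranspose_mul]
  rw [h]
  calc _ = star (hA.eigenvectorUnitary : Matrix (Fin d) (Fin d) ℂ) *
        (((hB.eigenvectorUnitary : Matrix (Fin d) (Fin d) ℂ) *
          star (hB.eigenvectorUnitary : Matrix (Fin d) (Fin d) ℂ)) *
        (hA.eigenvectorUnitary : Matrix (Fin d) (Fin d) ℂ)) := by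
        simp only [Matrix.mul_assoc]
    _ = 1 := by rw [mul_star_self_u hB, Matrix.one_mul, star_mul_self_u hA]

lemma MH_mul_M {A B : Matrix (Fin d) (Fin d) ℂ} (hA : A.IsHermitian) (hB : B.IsHermitian) :
    (star (hA.eigenvectorUnitary : Matrix (Fin d) (Fin d) ℂ) *
      (hB.eigenvectorUnitary : Matrix (Fin d) (Fin d) ℂ))ᴴ *
    (star (hA.eigenvectorUnitary : Matrix (Fin d) (Fin d) ℂ) *
      (hB.eigenvectorUnitary : Matrix (Fin d) (Fin d) ℂ)) = 1 := by
  have h : (star (hA.eigenvectorUnitary : Matrix (Fin d) (Fin d) ℂ) *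
      (hB.eigenvectorUnitary : Matrix (Fin d) (Fin d) ℂ))ᴴ =
      star (hB.eigenvectorUnitary : Matrix (Fin d) (Fin d) ℂ) *
        (hA.eigenvectorUnitary : Matrix (Fin d) (Fin d) ℂ) := by
    simp [star_eq_conjTranspose, conjTranspose_mul]
  rw [h]
  calc _ = star (hB.eigenvectorUnitary : Matrix (Fin d) (Fin d) ℂ) *
        (((hA.eigenvectorUnitary : Matrix (Fin d) (Fin d) ℂ) *
          star (hA.eigenvectorUnitary : Matrix (Fin d) (Fin d) ℂ)) *
        (hB.eigenvectorUnitary : Matrix (Fin d) (Fin d) ℂ)) := by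
        simp only [Matrix.mul_assoc]
    _ = 1 := by rw [mul_star_self_u hA, Matrix.one_mul, star_mul_self_u hB]

lemma fpow_le_bound {α N x : ℝ} (hα0 : 0 < α) (hα1 : α < 1) (hx : 0 ≤ x) (hxN : x ≤ N) :
    fpow ((1 - α)/α) x ≤ N ^ ((1 - α)^2/α) * fpow (1 - α) x := by
  rcases hx.lt_or_eq with h | h
  · rw [fpow_of_pos h, fpow_of_pos h]
    have he : (1 - α)/α = (1 - α) + (1 - α)^2/α := by
      field_simp
      ring
    rw [he, Real.rpow_add h, mul_comm]
    exact mul_le_mul_of_nonneg_right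
      (Real.rpow_le_rpow h.le hxN (div_nonneg (sq_nonneg _) hα0.le))
      (Real.rpow_nonneg h.le _)
  · rw [← h, fpow_zero', fpow_zero', mul_zero]


lemma eigenvalue_le_opNorm (hA : A.IsHermitian) (hP : A.PosSemidef) (k : Fin d) :
    hA.eigenvalues k ≤ opNorm A := by
  set v := hA.eigenvectorBasis k with hv
  have hnv : ‖v‖ = 1 := hA.eigenvectorBasis.orthonormal.1 k
  have happ : (Matrix.toEuclideanCLM (𝕜 := ℂ) A) v = (hA.eigenvalues k : ℂ) • v := by
    apply WithLp.ofLp_injective 2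
    rw [Matrix.ofLp_toEuclideanCLM, WithLp.ofLp_smul, hv, hA.mulVec_eigenvectorBasis k]
    ext m
    simp
  have hnorm : ‖(Matrix.toEuclideanCLM (𝕜 := ℂ) A) v‖ = hA.eigenvalues k := by
    rw [happ, norm_smul, hnv, mul_one, Complex.norm_real,
      Real.norm_of_nonneg (hP.eigenvalues_nonneg k)]
  calc hA.eigenvalues k = ‖(Matrix.toEuclideanCLM (𝕜 := ℂ) A) v‖ := hnorm.symm
    _ ≤ opNorm A * ‖v‖ := (Matrix.toEuclideanCLM (𝕜 := ℂ) A).le_opNorm v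
    _ = opNorm A := by rw [hnv, mul_one]

lemma eigenvalues_of_zero (hA : A.IsHermitian) (h0 : A = 0) (i : Fin d) :
    hA.eigenvalues i = 0 := by
  subst h0
  exact congrFun (hA.eigenvalues_eq_zero_iff.mpr rfl) i


end AudAux

open AudAux in
theorem audenaert_converse_alt {d : ℕ} (hd : 1 ≤ d)
    (ρ σ : Matrix (Fin d) (Fin d) ℂ)
    (hρ : ρ.PosSemidef) (hσ : σ.PosSemidef)
    {α : ℝ} (hα : α ∈ Set.Ioo (0 : ℝ) 1) :
    ((mPow (mPow ρ (1/2) * mPow σ ((1 - α)/α) * mPow ρ (1/2)) α).trace).re ≤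
      opNorm σ ^ ((1 - α) ^ 2) * (((mPow ρ α).trace).re) ^ (1 - α) *
        (((mPow ρ α * mPow σ (1 - α)).trace).re) ^ α := by
  obtain ⟨hα0, hα1⟩ := hα
  set N := opNorm σ with hN
  have hNnn : (0:ℝ) ≤ N := norm_nonneg _
  set Z := mPow ρ (1/2) * mPow σ ((1 - α)/α) * mPow ρ (1/2) with hZdef
  have hBpsd : (matFun hσ.1 (fpow ((1 - α)/α))).PosSemidef :=
    matFun_posSemidef _ _ (fun j => fpow_nonneg (hσ.eigenvalues_nonneg j))
  have hZeq : Z = matFun hρ.1 (fpow (1/2)) * matFun hσ.1 (fpow ((1 - α)/α)) *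
      matFun hρ.1 (fpow (1/2)) := by
    rw [hZdef, mPow_eq hρ.1, mPow_eq hσ.1]
  have hSh : (matFun hρ.1 (fpow (1/2))).IsHermitian := matFun_isHermitian _ _
  have hZpsd : Z.PosSemidef := by
    rw [hZeq]
    have h := hBpsd.conjTranspose_mul_mul_same (matFun hρ.1 (fpow (1/2)))
    rwa [hSh.eq] at h
  have hZh := hZpsd.1
  set a := hρ.1.eigenvalues with ha
  set z := hZh.eigenvalues with hz
  set s := hσ.1.eigenvalues with hs
  set L := ∑ j, fpow α (a j) with hL
  set M2 := star (hρ.1.eigenvectorUnitary : Matrix (Fin d) (Fin d) ℂ) *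
    (hσ.1.eigenvectorUnitary : Matrix (Fin d) (Fin d) ℂ) with hM2
  set K0 := ∑ j, ∑ k, fpow α (a j) * fpow (1 - α) (s k) * Complex.normSq (M2 j k) with hK0
  set M1 := star (hρ.1.eigenvectorUnitary : Matrix (Fin d) (Fin d) ℂ) *
    (hZh.eigenvectorUnitary : Matrix (Fin d) (Fin d) ℂ) with hM1
  set Ktr := ∑ j, ∑ i, fpow (α - 1) (a j) * z i * Complex.normSq (M1 j i) with hKtr
  -- rewrite goal in real terms
  have gLHS : ((mPow Z α).trace).re = ∑ i, fpow α (z i) := by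
    rw [mPow_eq hZh, trace_matFun]
    exact Complex.ofReal_re _
  have gL : ((mPow ρ α).trace).re = L := by
    rw [mPow_eq hρ.1, trace_matFun]
    exact Complex.ofReal_re _
  have gK0 : ((mPow ρ α * mPow σ (1 - α)).trace).re = K0 := by
    rw [mPow_eq hρ.1, mPow_eq hσ.1, trace_pair]
    exact Complex.ofReal_re _
  rw [gLHS, gL, gK0]
  -- trace identities
  have hGZ : (matFun hρ.1 (fpow (α - 1)) * Z).trace = ((Ktr : ℝ) : ℂ) := by
    nth_rewrite 1 [show Z = matFun hZh (fun x => x) from (matFun_id hZh).symm]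
    rw [trace_pair]
  have hRB : (matFun hρ.1 (fpow (α - 1)) * Z).trace =
      (matFun hρ.1 (fpow α) * matFun hσ.1 (fpow ((1 - α)/α))).trace := by
    rw [hZeq]
    have step1 : matFun hρ.1 (fpow (α - 1)) *
        (matFun hρ.1 (fpow (1/2)) * matFun hσ.1 (fpow ((1 - α)/α)) *
          matFun hρ.1 (fpow (1/2))) =
        (matFun hρ.1 (fpow (α - 1)) * matFun hρ.1 (fpow (1/2)) *
          matFun hσ.1 (fpow ((1 - α)/α))) * matFun hρ.1 (fpow (1/2)) := by
      simp only [Matrix.mul_assoc]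
    rw [step1, Matrix.trace_mul_comm]
    have step2 : matFun hρ.1 (fpow (1/2)) *
        (matFun hρ.1 (fpow (α - 1)) * matFun hρ.1 (fpow (1/2)) *
          matFun hσ.1 (fpow ((1 - α)/α))) =
        (matFun hρ.1 (fpow (1/2)) * matFun hρ.1 (fpow (α - 1)) *
          matFun hρ.1 (fpow (1/2))) * matFun hσ.1 (fpow ((1 - α)/α)) := by
      simp only [Matrix.mul_assoc]
    have hSGS : matFun hρ.1 (fpow (1/2)) * matFun hρ.1 (fpow (α - 1)) *
        matFun hρ.1 (fpow (1/2)) = matFun hρ.1 (fpow α) := by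
      rw [matFun_mul, matFun_mul]
      apply matFun_congr
      intro j
      show fpow (1/2) (a j) * fpow (α - 1) (a j) * fpow (1/2) (a j) = fpow α (a j)
      rw [fpow_add (hρ.eigenvalues_nonneg j), fpow_add (hρ.eigenvalues_nonneg j),
        show (1:ℝ)/2 + (α - 1) + 1/2 = α by ring]
    rw [step2, hSGS]
  have hKtr_eq : Ktr = ∑ j, ∑ k, fpow α (a j) * fpow ((1 - α)/α) (s k) *
      Complex.normSq (M2 j k) := by
    have hcplx : ((Ktr : ℝ) : ℂ) = ((∑ j, ∑ k, fpow α (a j) * fpow ((1 - α)/α) (s k) *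
        Complex.normSq (M2 j k) : ℝ) : ℂ) := by
      rw [← hGZ, hRB, trace_pair]
    exact_mod_cast hcplx
  set NE := N ^ ((1 - α)^2/α) with hNE
  have hNEnn : (0:ℝ) ≤ NE := Real.rpow_nonneg hNnn _
  have hKtrK0 : Ktr ≤ NE * K0 := by
    rw [hKtr_eq, hK0, Finset.mul_sum]
    apply Finset.sum_le_sum
    intro j _
    rw [Finset.mul_sum]
    apply Finset.sum_le_sum
    intro k _
    have hb := fpow_le_bound hα0 hα1 (hσ.eigenvalues_nonneg k)
      (eigenvalue_le_opNorm hσ.1 hσ k)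
    calc fpow α (a j) * fpow ((1 - α)/α) (s k) * Complex.normSq (M2 j k)
        ≤ fpow α (a j) * (NE * fpow (1 - α) (s k)) * Complex.normSq (M2 j k) := by
          apply mul_le_mul_of_nonneg_right _ (Complex.normSq_nonneg _)
          exact mul_le_mul_of_nonneg_left hb (fpow_nonneg (hρ.eigenvalues_nonneg j))
      _ = NE * (fpow α (a j) * fpow (1 - α) (s k) * Complex.normSq (M2 j k)) := by ring
  set K := NE * K0 with hK
  have hK0nn : (0:ℝ) ≤ K0 := by
    apply Finset.sum_nonneg
    intro j _
    apply Finset.sum_nonneg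
    intro k _
    exact mul_nonneg (mul_nonneg (fpow_nonneg (hρ.eigenvalues_nonneg j))
      (fpow_nonneg (hσ.eigenvalues_nonneg k))) (Complex.normSq_nonneg _)
  have hKnn : (0:ℝ) ≤ K := mul_nonneg hNEnn hK0nn
  -- step A : Klein-type bound for every c > 0
  have stepA : ∀ c : ℝ, 0 < c →
      (∑ i, fpow α (z i)) ≤ α * c ^ (α - 1) * K + (1 - α) * c ^ α * L := by
    intro c hc
    have h1 := core a z (fun j i => Complex.normSq (M1 j i)) hα0 hα1 hc
      (fun j => hρ.eigenvalues_nonneg j) (fun i => hZpsd.eigenvalues_nonneg i)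
      (fun j i => Complex.normSq_nonneg _)
      (fun i => sum_normSq_col M1 (MH_mul_M hρ.1 hZh) i)
      (fun j => sum_normSq_row M1 (M_mul_MH hρ.1 hZh) j)
      (fun j i haj hzi => by
        have h0 := support_vanish hρ.1 hZh (matFun hσ.1 (fpow ((1 - α)/α))) (fpow (1/2))
          hZeq (by rw [← ha, haj, fpow_zero']) hzi
        simp only [hM1, h0, Complex.normSq_zero])
    refine h1.trans ?_
    have h2 : α * c ^ (α - 1) * Ktr ≤ α * c ^ (α - 1) * K :=
      mul_le_mul_of_nonneg_left hKtrK0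
        (mul_nonneg hα0.le (Real.rpow_nonneg hc.le _))
    linarith
  -- case split on L
  have hLnn : (0:ℝ) ≤ L :=
    Finset.sum_nonneg (fun j _ => fpow_nonneg (hρ.eigenvalues_nonneg j))
  rcases hLnn.lt_or_eq with hLpos | hLzero
  · -- L > 0
    have main : ∀ ε : ℝ, 0 < ε →
        (∑ i, fpow α (z i)) ≤ (K + ε) ^ α * L ^ (1 - α) := by
      intro ε hε
      have hP : (0:ℝ) < K + ε := by linarith
      have hc : (0:ℝ) < (K + ε) / L := div_pos hP hLpos
      have h1 := stepA ((K + ε) / L) hc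
      have h2 : α * ((K + ε) / L) ^ (α - 1) * K ≤ α * ((K + ε) / L) ^ (α - 1) * (K + ε) :=
        mul_le_mul_of_nonneg_left (by linarith)
          (mul_nonneg hα0.le (Real.rpow_nonneg hc.le _))
      have halg : α * ((K + ε) / L) ^ (α - 1) * (K + ε) +
          (1 - α) * ((K + ε) / L) ^ α * L = (K + ε) ^ α * L ^ (1 - α) := by
        have hc1 : ((K + ε) / L) ^ (α - 1) = (K + ε) ^ (α - 1) * (L ^ (α - 1))⁻¹ := by
          rw [Real.div_rpow hP.le hLpos.le, div_eq_mul_inv]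
        have hc2 : ((K + ε) / L) ^ α = (K + ε) ^ α * (L ^ α)⁻¹ := by
          rw [Real.div_rpow hP.le hLpos.le, div_eq_mul_inv]
        have e1 : (K + ε) ^ (α - 1) * (K + ε) = (K + ε) ^ α := by
          rw [← Real.rpow_add_one hP.ne' (α - 1)]
          norm_num
        have e2 : (L ^ (α - 1))⁻¹ = L ^ (1 - α) := by
          rw [← Real.rpow_neg hLpos.le, neg_sub]
        have e3 : (L ^ α)⁻¹ * L = L ^ (1 - α) := by
          have : L ^ (1 - α) = L ^ (-α) * L := by
            rw [show (1 - α) = -α + 1 by ring, Real.rpow_add_one hLpos.ne']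
          rw [this, Real.rpow_neg hLpos.le]
        calc α * ((K + ε) / L) ^ (α - 1) * (K + ε) + (1 - α) * ((K + ε) / L) ^ α * L
            = α * ((K + ε) ^ (α - 1) * (K + ε)) * (L ^ (α - 1))⁻¹ +
              (1 - α) * (K + ε) ^ α * ((L ^ α)⁻¹ * L) := by
              rw [hc1, hc2]; ring
          _ = α * ((K + ε) ^ α) * L ^ (1 - α) +
              (1 - α) * (K + ε) ^ α * L ^ (1 - α) := by rw [e1, e2, e3]
          _ = (K + ε) ^ α * L ^ (1 - α) := by ring
      linarith
    have hcont : ContinuousAt (fun x : ℝ => x ^ α) K :=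
      Real.continuousAt_rpow_const K α (Or.inr hα0.le)
    have htend0 : Filter.Tendsto (fun ε : ℝ => K + ε)
        (nhdsWithin 0 (Set.Ioi 0)) (nhds K) := by
      have h : Filter.Tendsto (fun ε : ℝ => K + ε) (nhds 0) (nhds (K + 0)) :=
        Filter.Tendsto.const_add K Filter.tendsto_id
      rw [add_zero] at h
      exact h.mono_left nhdsWithin_le_nhds
    have htend : Filter.Tendsto (fun ε : ℝ => (K + ε) ^ α * L ^ (1 - α))
        (nhdsWithin 0 (Set.Ioi 0)) (nhds (K ^ α * L ^ (1 - α))) :=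
      (hcont.tendsto.comp htend0).mul_const _
    have hfinal : (∑ i, fpow α (z i)) ≤ K ^ α * L ^ (1 - α) := by
      refine ge_of_tendsto htend ?_
      filter_upwards [self_mem_nhdsWithin] with ε hε using main ε hε
    refine hfinal.trans (le_of_eq ?_)
    rw [hK, Real.mul_rpow hNEnn hK0nn, hNE, ← Real.rpow_mul hNnn]
    rw [div_mul_cancel₀ _ hα0.ne']
    ring
  · -- L = 0
    have haz : ∀ j, a j = 0 := by
      intro j
      by_contra hne
      have hpos : 0 < fpow α (a j) := by
        rw [fpow_of_pos ((hρ.eigenvalues_nonneg j).lt_of_ne (Ne.symm hne))]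
        exact Real.rpow_pos_of_pos ((hρ.eigenvalues_nonneg j).lt_of_ne (Ne.symm hne)) _
      have hle : fpow α (a j) ≤ L :=
        Finset.single_le_sum (fun k _ => fpow_nonneg (hρ.eigenvalues_nonneg k))
          (Finset.mem_univ j)
      linarith [hLzero ▸ hle]
    have hS0 : matFun hρ.1 (fpow (1/2)) = 0 := by
      rw [matFun_congr hρ.1 (h := fun _ => 0) (fun j => by rw [← ha, haz j, fpow_zero']),
        matFun_zero]
    have hZ0 : Z = 0 := by
      rw [hZeq, hS0]
      simp
    have hz0 : ∀ i, z i = 0 := fun i => eigenvalues_of_zero hZh hZ0 i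
    rw [show (∑ i, fpow α (z i)) = 0 from
      Finset.sum_eq_zero fun i _ => by rw [hz0 i, fpow_zero']]
    rw [← hLzero, Real.zero_rpow (by linarith : (1:ℝ) - α ≠ 0), mul_zero, zero_mul]
end

section
/- Let ρ_1, …, ρ_r be states (positive semidefinite d×d complex matrices of trace 1), let σ be a nonzero positive semidefinite d×d matrix, let γ_1, …, γ_r be a probability distribution (γ_i ≥ 0, Σ_i γ_i = 1), and let α ∈ (0,1). Then Σ_i γ_i · Q_α^new(ρ_i‖σ) ≤ Q_α^new(Σ_i γ_i ρ_i‖σ) ≤ Σ_i γ_i^α · Q_α^new(ρ_i‖σ). -/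
open scoped BigOperators ComplexOrder

/-- The core quantity of the new (sandwiched) Rényi α-divergence. -/
noncomputable def Qnew {d : ℕ} (ρ σ : Matrix (Fin d) (Fin d) ℂ) (α : ℝ) : ℝ :=
  ((mPow (mPow σ ((1 - α)/(2*α)) * ρ * mPow σ ((1 - α)/(2*α))) α).trace).re


open Matrix Set MeasureTheory

namespace QnewAux

/-- the base integrand -/
noncomputable def base (α : ℝ) (t : ℝ) : ℝ := t ^ (α - 1) / (1 + t)

noncomputable def cc (α : ℝ) : ℝ := ∫ t in Ioi (0:ℝ), base α t

lemma base_nonneg {α t : ℝ} (ht : 0 < t) : 0 ≤ base α t := by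
  unfold base
  positivity

lemma measurable_base (α : ℝ) : Measurable (base α) := by
  unfold base
  fun_prop

lemma integrableOn_base {α : ℝ} (hα : α ∈ Set.Ioo (0:ℝ) 1) :
    IntegrableOn (base α) (Ioi (0:ℝ)) := by
  have h1 : IntegrableOn (base α) (Ioc (0:ℝ) 1) := by
    have hb : IntegrableOn (fun t : ℝ => t ^ (α - 1)) (Ioc (0:ℝ) 1) := by
      have := (intervalIntegral.intervalIntegrable_rpow' (a := 0) (b := 1)
        (r := α - 1) (by linarith [hα.1]))
      rwa [intervalIntegrable_iff_integrableOn_Ioc_of_le (by norm_num)] at this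
    refine hb.mono' ((measurable_base α).aestronglyMeasurable) ?_
    filter_upwards [ae_restrict_mem measurableSet_Ioc] with t ht
    have ht0 : 0 < t := ht.1
    rw [Real.norm_eq_abs, abs_of_nonneg (base_nonneg ht0)]
    unfold base
    rw [div_le_iff₀ (by linarith)]
    nlinarith [Real.rpow_nonneg ht0.le (α - 1)]
  have h2 : IntegrableOn (base α) (Ioi (1:ℝ)) := by
    have hb : IntegrableOn (fun t : ℝ => t ^ (α - 2)) (Ioi (1:ℝ)) :=
      integrableOn_Ioi_rpow_of_lt (by linarith [hα.2]) one_pos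
    refine hb.mono' ((measurable_base α).aestronglyMeasurable) ?_
    filter_upwards [ae_restrict_mem measurableSet_Ioi] with t ht
    have ht0 : (0:ℝ) < t := lt_trans one_pos ht
    rw [Real.norm_eq_abs, abs_of_nonneg (base_nonneg ht0)]
    unfold base
    rw [div_le_iff₀ (by linarith)]
    have h3 : t ^ (α - 2) * t = t ^ (α - 1) := by
      rw [← Real.rpow_add_one ht0.ne']
      congr 1
      ring
    nlinarith [Real.rpow_nonneg ht0.le (α - 2)]
  have : Ioc (0:ℝ) 1 ∪ Ioi 1 = Ioi (0:ℝ) := Ioc_union_Ioi_eq_Ioi (by norm_num)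
  rw [← this]
  exact h1.union h2

lemma cc_pos {α : ℝ} (hα : α ∈ Set.Ioo (0:ℝ) 1) : 0 < cc α := by
  rw [cc, setIntegral_pos_iff_support_of_nonneg_ae ?_ (integrableOn_base hα)]
  · have hsub : Ioi (0:ℝ) ⊆ Function.support (base α) := by
      intro t ht
      have ht' : (0:ℝ) < t := ht
      have : 0 < base α t := by
        unfold base
        positivity
      exact this.ne'
    calc (0 : ENNReal) < volume (Ioi (0:ℝ)) := by simp
    _ ≤ volume (Function.support (base α) ∩ Ioi 0) := by
        rw [inter_eq_right.mpr hsub]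
  · filter_upwards [ae_restrict_mem measurableSet_Ioi] with t ht
    exact base_nonneg ht

/-- the kernel -/
noncomputable def ker (α l : ℝ) (t : ℝ) : ℝ := t ^ (α - 1) * (l / (l + t))

lemma ker_nonneg {α l : ℝ} (hl : 0 ≤ l) {t : ℝ} (ht : 0 < t) : 0 ≤ ker α l t := by
  unfold ker
  positivity

lemma ker_zero (α : ℝ) : ker α 0 = fun _ => 0 := by
  funext t; simp [ker]

lemma ker_eq_on_Ioi {α l : ℝ} (hl : 0 < l) {s : ℝ} (hs : 0 < s) :
    ker α l (l * s) = l ^ (α - 1) * base α s := by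
  unfold ker base
  rw [Real.mul_rpow hl.le hs.le]
  have h1 : l / (l + l * s) = 1 / (1 + s) := by
    rw [div_eq_div_iff (by nlinarith) (by nlinarith)]
    ring
  rw [h1]
  ring

lemma measurable_ker (α l : ℝ) : Measurable (ker α l) := by
  unfold ker; fun_prop

lemma integrableOn_ker {α : ℝ} (hα : α ∈ Set.Ioo (0:ℝ) 1) {l : ℝ} (hl : 0 ≤ l) :
    IntegrableOn (ker α l) (Ioi (0:ℝ)) := by
  rcases eq_or_lt_of_le hl with h | hl
  · rw [← h, ker_zero]
    exact integrableOn_zero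
  · have hiff := integrableOn_Ioi_comp_mul_left_iff (ker α l) 0 hl
    rw [mul_zero] at hiff
    rw [← hiff]
    exact (IntegrableOn.congr_fun ((integrableOn_base hα).const_mul (l ^ (α - 1)))
      (fun x hx => (ker_eq_on_Ioi hl hx).symm) measurableSet_Ioi)

lemma integral_ker {α : ℝ} (hα : α ∈ Set.Ioo (0:ℝ) 1) {l : ℝ} (hl : 0 ≤ l) :
    ∫ t in Ioi (0:ℝ), ker α l t = cc α * l ^ α := by
  rcases eq_or_lt_of_le hl with h | hl
  · rw [← h, ker_zero]
    simp [Real.zero_rpow (by linarith [hα.1] : α ≠ 0)]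
  · have h1 := integral_comp_mul_left_Ioi (ker α l) 0 hl
    rw [mul_zero] at h1
    have h2 : ∫ x in Ioi (0:ℝ), ker α l (l * x) = ∫ x in Ioi (0:ℝ), l ^ (α - 1) * base α x := by
      apply setIntegral_congr_fun measurableSet_Ioi
      intro x hx
      exact ker_eq_on_Ioi hl hx
    rw [h2, integral_const_mul, smul_eq_mul] at h1
    have hlne : l ≠ 0 := hl.ne'
    have h3 : ∫ x in Ioi (0:ℝ), ker α l x = l * (l ^ (α - 1) * ∫ x in Ioi (0:ℝ), base α x) := by
      rw [h1, ← mul_assoc, mul_inv_cancel₀ hlne, one_mul]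
    rw [h3, ← cc]
    rw [show l ^ α = l ^ (α - 1 + 1) by norm_num, Real.rpow_add_one hlne]
    ring

variable {d : ℕ}

lemma form_single (M : Matrix (Fin d) (Fin d) ℂ) (j : Fin d) :
    dotProduct (star (Pi.single j 1)) (M *ᵥ Pi.single j 1) = M j j := by
  have h1 : star (Pi.single j (1:ℂ)) = (Pi.single j (1:ℂ) : Fin d → ℂ) := by
    funext x
    simp [Pi.single_apply, apply_ite]
  rw [h1]
  simp [dotProduct, Pi.single_apply, mulVec, ite_mul, Finset.sum_ite_eq']

lemma ofReal_mul_nonneg {γ : ℝ} (hγ : 0 ≤ γ) {z : ℂ} (hz : 0 ≤ z) : 0 ≤ (γ:ℂ) * z := by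
  rw [Complex.nonneg_iff] at hz ⊢
  constructor
  · simp only [Complex.mul_re, Complex.ofReal_re, Complex.ofReal_im, zero_mul, sub_zero]
    exact mul_nonneg hγ hz.1
  · simp [Complex.mul_im, ← hz.2]

lemma trace_re_nonneg_of_psd {A : Matrix (Fin d) (Fin d) ℂ} (hA : A.PosSemidef) :
    0 ≤ A.trace.re := by
  have h : ∀ j, 0 ≤ A j j := fun j => form_single A j ▸ hA.dotProduct_mulVec_nonneg (Pi.single j 1)
  rw [Matrix.trace, Complex.re_sum]
  exact Finset.sum_nonneg fun j _ => (Complex.nonneg_iff.mp (h j)).1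

lemma trace_mul_psd_re_nonneg {A P : Matrix (Fin d) (Fin d) ℂ}
    (hA : A.PosSemidef) (hP : P.PosSemidef) : 0 ≤ ((A * P).trace).re := by
  obtain ⟨B, hB⟩ : ∃ B : Matrix (Fin d) (Fin d) ℂ, A = star B * B := by
    open scoped MatrixOrder in
    exact CStarAlgebra.nonneg_iff_eq_star_mul_self.mp hA.nonneg
  have h2 : (A * P).trace = (B * P * Bᴴ).trace := by
    rw [hB, Matrix.star_eq_conjTranspose, Matrix.mul_assoc, trace_mul_comm]
  have h3 : (B * P * Bᴴ).PosSemidef := hP.mul_mul_conjTranspose_same B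
  rw [h2]
  exact trace_re_nonneg_of_psd h3

lemma posSemidef_real_smul {A : Matrix (Fin d) (Fin d) ℂ} (hA : A.PosSemidef)
    {γ : ℝ} (hγ : 0 ≤ γ) : ((γ:ℂ) • A).PosSemidef := by
  have hherm : ((γ:ℂ) • A).IsHermitian := by
    rw [Matrix.IsHermitian, conjTranspose_smul, Complex.star_def, Complex.conj_ofReal, hA.1.eq]
  refine Matrix.PosSemidef.of_dotProduct_mulVec_nonneg hherm (fun x => ?_)
  rw [smul_mulVec, dotProduct_smul, smul_eq_mul]
  exact ofReal_mul_nonneg hγ (hA.dotProduct_mulVec_nonneg x)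

lemma posSemidef_sum {ι : Type*} (s : Finset ι) (f : ι → Matrix (Fin d) (Fin d) ℂ)
    (h : ∀ i ∈ s, (f i).PosSemidef) : (∑ i ∈ s, f i).PosSemidef :=
  Finset.sum_induction f _ (fun _ _ ha hb => ha.add hb) Matrix.PosSemidef.zero h

/-- key variational inequality: for `A` pos. def.,
`⟨w,v⟩ + ⟨v,w⟩ - ⟨w, A w⟩ ≤ ⟨v, A⁻¹ v⟩` (real parts). -/
lemma key_var {A : Matrix (Fin d) (Fin d) ℂ} (hA : A.PosDef) (v w : Fin d → ℂ) :
    (dotProduct (star w) v).re + (dotProduct (star v) w).re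
      - (dotProduct (star w) (A *ᵥ w)).re ≤ (dotProduct (star v) (A⁻¹ *ᵥ v)).re := by
  have hdet : IsUnit A.det := by
    rw [isUnit_iff_ne_zero]
    exact_mod_cast hA.det_pos.ne'
  obtain ⟨p, hp⟩ : ∃ p : Fin d → ℂ, p = A⁻¹ *ᵥ v := ⟨_, rfl⟩
  have hAp : A *ᵥ p = v := by
    rw [hp, mulVec_mulVec, Matrix.mul_nonsing_inv _ hdet, one_mulVec]
  have hsp : ∀ u : Fin d → ℂ, dotProduct (star p) (A *ᵥ u) = dotProduct (star v) u := by
    intro u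
    have h2 : star p ᵥ* A = star v := by
      have := Matrix.star_mulVec (M := Aᴴ) (v := p)
      rw [conjTranspose_conjTranspose, hA.isHermitian.eq, hAp] at this
      exact this.symm
    rw [dotProduct_mulVec, h2]
  have hwv : dotProduct (star w) (A *ᵥ p) = dotProduct (star w) v := by rw [hAp]
  have hexp : dotProduct (star (w - p)) (A *ᵥ (w - p))
      = dotProduct (star w) (A *ᵥ w) - dotProduct (star w) v
        - dotProduct (star v) w + dotProduct (star v) p := by
    rw [mulVec_sub, star_sub, sub_dotProduct, dotProduct_sub, dotProduct_sub,
      hsp w, hsp p, hwv]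
    ring
  have hpsd := hA.posSemidef.dotProduct_mulVec_nonneg (w - p)
  have h0 : 0 ≤ (dotProduct (star (w - p)) (A *ᵥ (w - p))).re :=
    (Complex.nonneg_iff.mp hpsd).1
  rw [hexp] at h0
  simp only [Complex.sub_re, Complex.add_re] at h0
  rw [hp] at h0
  linarith

/-! ### Spectral lemmas -/

noncomputable def phi (A : Matrix (Fin d) (Fin d) ℂ) (t : ℝ) : ℝ :=
  ((A * (A + (t:ℂ) • 1)⁻¹).trace).re

noncomputable def trInv (A : Matrix (Fin d) (Fin d) ℂ) (t : ℝ) : ℝ :=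
  (((A + (t:ℂ) • 1)⁻¹).trace).re

lemma conj_unitary_trace (U : Matrix.unitaryGroup (Fin d) ℂ) (f : Fin d → ℂ) :
    ((U : Matrix (Fin d) (Fin d) ℂ) * Matrix.diagonal f *
      star (U : Matrix (Fin d) (Fin d) ℂ)).trace = ∑ j, f j := by
  rw [Matrix.trace_mul_cycle, Matrix.mem_unitaryGroup_iff'.mp U.2, Matrix.one_mul,
    Matrix.trace_diagonal]
lemma conj_unitary_mul (U : Matrix.unitaryGroup (Fin d) ℂ) (f g : Fin d → ℂ) :
    ((U : Matrix (Fin d) (Fin d) ℂ) * Matrix.diagonal f * star (U : Matrix (Fin d) (Fin d) ℂ)) *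
      ((U : Matrix (Fin d) (Fin d) ℂ) * Matrix.diagonal g * star (U : Matrix (Fin d) (Fin d) ℂ))
    = (U : Matrix (Fin d) (Fin d) ℂ) * Matrix.diagonal (fun j => f j * g j) *
        star (U : Matrix (Fin d) (Fin d) ℂ) := by
  have h : star (U : Matrix (Fin d) (Fin d) ℂ) * (U : Matrix (Fin d) (Fin d) ℂ) = 1 :=
    Matrix.mem_unitaryGroup_iff'.mp U.2
  have : Matrix.diagonal f * Matrix.diagonal g = Matrix.diagonal (fun j => f j * g j) := by
    rw [Matrix.diagonal_mul_diagonal]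
  calc ((U : Matrix (Fin d) (Fin d) ℂ) * Matrix.diagonal f * star (U : Matrix (Fin d) (Fin d) ℂ)) *
      ((U : Matrix (Fin d) (Fin d) ℂ) * Matrix.diagonal g * star (U : Matrix (Fin d) (Fin d) ℂ))
      = (U : Matrix (Fin d) (Fin d) ℂ) * Matrix.diagonal f *
        ((star (U : Matrix (Fin d) (Fin d) ℂ) * (U : Matrix (Fin d) (Fin d) ℂ)) *
          (Matrix.diagonal g * star (U : Matrix (Fin d) (Fin d) ℂ))) := by
        simp only [Matrix.mul_assoc]
    _ = (U : Matrix (Fin d) (Fin d) ℂ) * Matrix.diagonal (fun j => f j * g j) *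
        star (U : Matrix (Fin d) (Fin d) ℂ) := by
        rw [h, Matrix.one_mul, ← this]
        simp only [Matrix.mul_assoc]

lemma conj_unitary_inv (U : Matrix.unitaryGroup (Fin d) ℂ) (f : Fin d → ℂ)
    (hf : ∀ j, f j ≠ 0) :
    ((U : Matrix (Fin d) (Fin d) ℂ) * Matrix.diagonal f *
      star (U : Matrix (Fin d) (Fin d) ℂ))⁻¹
    = (U : Matrix (Fin d) (Fin d) ℂ) * Matrix.diagonal (fun j => (f j)⁻¹) *
        star (U : Matrix (Fin d) (Fin d) ℂ) := by
  apply Matrix.inv_eq_right_inv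
  rw [conj_unitary_mul]
  have : (fun j => f j * (f j)⁻¹) = fun _ => (1:ℂ) := by
    funext j; exact mul_inv_cancel₀ (hf j)
  rw [this, Matrix.diagonal_one, Matrix.mul_one, Matrix.mem_unitaryGroup_iff.mp U.2]

lemma ofReal_rclike (x : ℝ) : (RCLike.ofReal x : ℂ) = (x:ℂ) := rfl

lemma diagonal_congr {f g : Fin d → ℂ} (h : ∀ j, f j = g j) :
    Matrix.diagonal f = Matrix.diagonal g := by
  rw [funext h]

lemma shift_decomp {A : Matrix (Fin d) (Fin d) ℂ} (hA : A.PosSemidef) (t : ℝ) :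
    A + (t:ℂ) • 1
    = (hA.1.eigenvectorUnitary : Matrix (Fin d) (Fin d) ℂ) *
        Matrix.diagonal (fun j => ((hA.1.eigenvalues j + t : ℝ) : ℂ)) *
        star (hA.1.eigenvectorUnitary : Matrix (Fin d) (Fin d) ℂ) := by
  have hUU : (hA.1.eigenvectorUnitary : Matrix (Fin d) (Fin d) ℂ) *
      star (hA.1.eigenvectorUnitary : Matrix (Fin d) (Fin d) ℂ) = 1 :=
    Matrix.mem_unitaryGroup_iff.mp hA.1.eigenvectorUnitary.2
  have h1 : (t:ℂ) • (1 : Matrix (Fin d) (Fin d) ℂ)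
      = (hA.1.eigenvectorUnitary : Matrix (Fin d) (Fin d) ℂ) *
          Matrix.diagonal (fun _ => (t:ℂ)) *
          star (hA.1.eigenvectorUnitary : Matrix (Fin d) (Fin d) ℂ) := by
    rw [← Matrix.smul_one_eq_diagonal]
    rw [Matrix.mul_smul, Matrix.smul_mul, Matrix.mul_one, hUU]
  conv_lhs => rw [hA.1.spectral_theorem, Unitary.conjStarAlgAut_apply, h1]
  rw [← Matrix.add_mul, ← Matrix.mul_add, Matrix.diagonal_add]
  congr 1
  congr 1
  apply diagonal_congr
  intro j
  simp only [Function.comp_apply, ofReal_rclike]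
  push_cast
  ring

lemma res_decomp {A : Matrix (Fin d) (Fin d) ℂ} (hA : A.PosSemidef) {t : ℝ} (ht : 0 < t) :
    (A + (t:ℂ) • 1)⁻¹
    = (hA.1.eigenvectorUnitary : Matrix (Fin d) (Fin d) ℂ) *
        Matrix.diagonal (fun j => (((hA.1.eigenvalues j + t)⁻¹ : ℝ) : ℂ)) *
        star (hA.1.eigenvectorUnitary : Matrix (Fin d) (Fin d) ℂ) := by
  have hf : ∀ j, ((hA.1.eigenvalues j + t : ℝ) : ℂ) ≠ 0 := by
    intro j
    have h0 := hA.eigenvalues_nonneg j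
    exact Complex.ofReal_ne_zero.mpr (by linarith)
  rw [shift_decomp hA t, conj_unitary_inv _ _ hf]
  congr 1
  congr 1
  apply diagonal_congr
  intro j
  push_cast
  ring

lemma trInv_eq {A : Matrix (Fin d) (Fin d) ℂ} (hA : A.PosSemidef) {t : ℝ} (ht : 0 < t) :
    trInv A t = ∑ j, (hA.1.eigenvalues j + t)⁻¹ := by
  rw [trInv, res_decomp hA ht, conj_unitary_trace]
  rw [← Complex.ofReal_sum]
  exact Complex.ofReal_re _

lemma phi_eq {A : Matrix (Fin d) (Fin d) ℂ} (hA : A.PosSemidef) {t : ℝ} (ht : 0 < t) :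
    phi A t = ∑ j, hA.1.eigenvalues j * (hA.1.eigenvalues j + t)⁻¹ := by
  have h1 : A * (A + (t:ℂ) • 1)⁻¹
      = ((hA.1.eigenvectorUnitary : Matrix (Fin d) (Fin d) ℂ) *
          Matrix.diagonal (RCLike.ofReal ∘ hA.1.eigenvalues) *
          star (hA.1.eigenvectorUnitary : Matrix (Fin d) (Fin d) ℂ)) *
        ((hA.1.eigenvectorUnitary : Matrix (Fin d) (Fin d) ℂ) *
          Matrix.diagonal (fun j => (((hA.1.eigenvalues j + t)⁻¹ : ℝ) : ℂ)) *
          star (hA.1.eigenvectorUnitary : Matrix (Fin d) (Fin d) ℂ)) := by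
    rw [← res_decomp hA ht]
    congr 1
    conv_lhs => rw [hA.1.spectral_theorem, Unitary.conjStarAlgAut_apply]
  have hd : A * (A + (t:ℂ) • 1)⁻¹
      = (hA.1.eigenvectorUnitary : Matrix (Fin d) (Fin d) ℂ) *
        Matrix.diagonal (fun j => ((hA.1.eigenvalues j * (hA.1.eigenvalues j + t)⁻¹ : ℝ) : ℂ)) *
        star (hA.1.eigenvectorUnitary : Matrix (Fin d) (Fin d) ℂ) := by
    rw [h1, conj_unitary_mul]
    congr 1
    congr 1
    apply diagonal_congr
    intro j
    simp only [Function.comp_apply, ofReal_rclike]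
    push_cast
    ring
  rw [phi, hd, conj_unitary_trace, ← Complex.ofReal_sum]
  exact Complex.ofReal_re _

lemma phi_card {A : Matrix (Fin d) (Fin d) ℂ} (hA : A.PosSemidef) {t : ℝ} (ht : 0 < t) :
    phi A t = d - t * trInv A t := by
  rw [phi_eq hA ht, trInv_eq hA ht, Finset.mul_sum]
  have h : ∀ j, hA.1.eigenvalues j * (hA.1.eigenvalues j + t)⁻¹
      = 1 - t * (hA.1.eigenvalues j + t)⁻¹ := by
    intro j
    have h0 := hA.eigenvalues_nonneg j
    have hpos : (0:ℝ) < hA.1.eigenvalues j + t := by linarith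
    field_simp
    ring
  rw [Finset.sum_congr rfl (fun j _ => h j), Finset.sum_sub_distrib]
  simp

/-! ### pointwise inequalities -/

lemma herm_form_im {M : Matrix (Fin d) (Fin d) ℂ} (hM : M.IsHermitian) (x : Fin d → ℂ) :
    (dotProduct (star x) (M *ᵥ x)).im = 0 := by
  have h1 : star (dotProduct (star x) (M *ᵥ x)) = dotProduct (star x) (M *ᵥ x) := by
    rw [← Matrix.star_dotProduct]
    rw [Matrix.star_mulVec, hM.eq, Matrix.dotProduct_mulVec]
  rw [Complex.star_def] at h1
  exact Complex.conj_eq_iff_im.mp h1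

lemma re_star_dot (v w : Fin d → ℂ) :
    (dotProduct (star w) v).re = (dotProduct (star v) w).re := by
  rw [Matrix.star_dotProduct, Complex.star_def, Complex.conj_re]

lemma form_re_mono {P : Matrix (Fin d) (Fin d) ℂ} (hP : P.PosSemidef) (x : Fin d → ℂ) :
    0 ≤ (dotProduct (star x) (P *ᵥ x)).re :=
  (Complex.nonneg_iff.mp (hP.dotProduct_mulVec_nonneg x)).1

lemma inv_form_antitone {A B : Matrix (Fin d) (Fin d) ℂ} (hA : A.PosDef) (hB : B.PosDef)
    (hBA : (B - A).PosSemidef) (v : Fin d → ℂ) :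
    (dotProduct (star v) (B⁻¹ *ᵥ v)).re ≤ (dotProduct (star v) (A⁻¹ *ᵥ v)).re := by
  have hdet : IsUnit B.det := by
    rw [isUnit_iff_ne_zero]; exact_mod_cast hB.det_pos.ne'
  obtain ⟨w, hw⟩ : ∃ w : Fin d → ℂ, w = B⁻¹ *ᵥ v := ⟨_, rfl⟩
  have hBw : B *ᵥ w = v := by
    rw [hw, mulVec_mulVec, Matrix.mul_nonsing_inv _ hdet, one_mulVec]
  have hform : (dotProduct (star w) (B *ᵥ w)).re = (dotProduct (star v) w).re := by
    rw [hBw]; exact re_star_dot v w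
  have hud : (dotProduct (star w) (A *ᵥ w)).re ≤ (dotProduct (star w) (B *ᵥ w)).re := by
    have h0 := form_re_mono hBA w
    rw [Matrix.sub_mulVec, dotProduct_sub, Complex.sub_re] at h0
    linarith
  have hkey := key_var hA v w
  have : (dotProduct (star v) (B⁻¹ *ᵥ v)).re = (dotProduct (star v) w).re := by rw [hw]
  rw [this]
  have h2 : (dotProduct (star w) v).re = (dotProduct (star v) w).re := re_star_dot v w
  linarith

lemma res_psd_sub {A B : Matrix (Fin d) (Fin d) ℂ} (hA : A.PosDef) (hB : B.PosDef)
    (hBA : (B - A).PosSemidef) : (A⁻¹ - B⁻¹).PosSemidef := by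
  refine Matrix.PosSemidef.of_dotProduct_mulVec_nonneg ((hA.isHermitian.inv).sub (hB.isHermitian.inv)) (fun x => ?_)
  rw [Matrix.sub_mulVec, dotProduct_sub, Complex.nonneg_iff]
  constructor
  · rw [Complex.sub_re]
    have := inv_form_antitone hA hB hBA x
    linarith
  · rw [Complex.sub_im, herm_form_im hA.isHermitian.inv x, herm_form_im hB.isHermitian.inv x]
    norm_num

lemma sum_mulVec {ι : Type*} (s : Finset ι) (M : ι → Matrix (Fin d) (Fin d) ℂ) (v : Fin d → ℂ) :
    (∑ i ∈ s, M i) *ᵥ v = ∑ i ∈ s, (M i *ᵥ v) := by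
  classical
  induction s using Finset.induction with
  | empty => simp [Matrix.zero_mulVec]
  | @insert a s h ih =>
    rw [Finset.sum_insert h, Finset.sum_insert h, Matrix.add_mulVec, ih]

lemma dot_sum {ι : Type*} (s : Finset ι) (v : Fin d → ℂ) (u : ι → (Fin d → ℂ)) :
    dotProduct v (∑ i ∈ s, u i) = ∑ i ∈ s, dotProduct v (u i) := by
  classical
  induction s using Finset.induction with
  | empty => simp
  | @insert a s h ih => rw [Finset.sum_insert h, Finset.sum_insert h, dotProduct_add, ih]

lemma inv_form_convex {r' : ℕ} {A : Fin r' → Matrix (Fin d) (Fin d) ℂ}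
    (hA : ∀ i, (A i).PosDef) {γ : Fin r' → ℝ} (hγ : ∀ i, 0 ≤ γ i) (hγ1 : ∑ i, γ i = 1)
    (hC : (∑ i, (γ i : ℂ) • A i).PosDef) (v : Fin d → ℂ) :
    (dotProduct (star v) ((∑ i, (γ i : ℂ) • A i)⁻¹ *ᵥ v)).re
      ≤ ∑ i, γ i * (dotProduct (star v) ((A i)⁻¹ *ᵥ v)).re := by
  obtain ⟨C, hCdef⟩ : ∃ C, C = ∑ i, (γ i : ℂ) • A i := ⟨_, rfl⟩
  rw [← hCdef] at hC ⊢
  have hdet : IsUnit C.det := by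
    rw [isUnit_iff_ne_zero]; exact_mod_cast hC.det_pos.ne'
  obtain ⟨w, hw⟩ : ∃ w : Fin d → ℂ, w = C⁻¹ *ᵥ v := ⟨_, rfl⟩
  have hCw : C *ᵥ w = v := by
    rw [hw, mulVec_mulVec, Matrix.mul_nonsing_inv _ hdet, one_mulVec]
  have hkey : ∀ i, γ i * ((dotProduct (star w) v).re + (dotProduct (star v) w).re
      - (dotProduct (star w) (A i *ᵥ w)).re)
      ≤ γ i * (dotProduct (star v) ((A i)⁻¹ *ᵥ v)).re :=
    fun i => mul_le_mul_of_nonneg_left (key_var (hA i) v w) (hγ i)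
  have hsum := Finset.sum_le_sum (fun i (_ : i ∈ Finset.univ) => hkey i)
  -- compute the left sum
  have hexp : ∑ i, γ i * ((dotProduct (star w) v).re + (dotProduct (star v) w).re
      - (dotProduct (star w) (A i *ᵥ w)).re)
      = (dotProduct (star w) v).re + (dotProduct (star v) w).re
        - (dotProduct (star w) (C *ᵥ w)).re := by
    have hCform : (dotProduct (star w) (C *ᵥ w)).re
        = ∑ i, γ i * (dotProduct (star w) (A i *ᵥ w)).re := by
      rw [hCdef, sum_mulVec, dot_sum, Complex.re_sum]
      apply Finset.sum_congr rfl
      intro i _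
      rw [smul_mulVec, dotProduct_smul, smul_eq_mul]
      simp [Complex.mul_re]
    have e1 : ∀ i : Fin r', γ i * ((dotProduct (star w) v).re + (dotProduct (star v) w).re
        - (dotProduct (star w) (A i *ᵥ w)).re)
        = γ i * ((dotProduct (star w) v).re + (dotProduct (star v) w).re)
          - γ i * (dotProduct (star w) (A i *ᵥ w)).re := fun i => by ring
    rw [Finset.sum_congr rfl (fun i _ => e1 i), Finset.sum_sub_distrib,
      ← Finset.sum_mul, hγ1, one_mul, hCform]
  rw [hexp] at hsum
  have hCf : (dotProduct (star w) (C *ᵥ w)).re = (dotProduct (star v) w).re := by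
    rw [hCw]; exact re_star_dot v w
  have h2 : (dotProduct (star w) v).re = (dotProduct (star v) w).re := re_star_dot v w
  have h3 : (dotProduct (star v) (C⁻¹ *ᵥ v)).re = (dotProduct (star v) w).re := by rw [hw]
  linarith

lemma trace_re_eq_sum_form (M : Matrix (Fin d) (Fin d) ℂ) :
    M.trace.re = ∑ j, (dotProduct (star (Pi.single j 1)) (M *ᵥ Pi.single j 1)).re := by
  rw [Matrix.trace, Complex.re_sum]
  exact Finset.sum_congr rfl (fun j _ => by rw [form_single]; rfl)

lemma shift_posDef {A : Matrix (Fin d) (Fin d) ℂ} (hA : A.PosSemidef) {t : ℝ} (ht : 0 < t) :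
    (A + (t:ℂ) • 1).PosDef := by
  have hdiag : ((t:ℂ) • (1 : Matrix (Fin d) (Fin d) ℂ)).PosDef := by
    rw [Matrix.smul_one_eq_diagonal]
    exact Matrix.posDef_diagonal_iff.mpr fun i => Complex.zero_lt_real.mpr ht
  exact Matrix.PosDef.posSemidef_add hA hdiag

lemma phi_subadd {A B : Matrix (Fin d) (Fin d) ℂ} (hA : A.PosSemidef) (hB : B.PosSemidef)
    {t : ℝ} (ht : 0 < t) : phi (A + B) t ≤ phi A t + phi B t := by
  have hAd := shift_posDef hA ht
  have hBd := shift_posDef hB ht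
  have hABd := shift_posDef (hA.add hB) ht
  have hdiffA : ((A + B + (t:ℂ)•1) - (A + (t:ℂ)•1)).PosSemidef := by
    have h : (A + B + (t:ℂ)•1) - (A + (t:ℂ)•1) = B := by abel
    rw [h]; exact hB
  have hdiffB : ((A + B + (t:ℂ)•1) - (B + (t:ℂ)•1)).PosSemidef := by
    have h : (A + B + (t:ℂ)•1) - (B + (t:ℂ)•1) = A := by abel
    rw [h]; exact hA
  have hP := res_psd_sub hAd hABd hdiffA
  have hQ := res_psd_sub hBd hABd hdiffB
  have h1 := trace_mul_psd_re_nonneg hA hP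
  have h2 := trace_mul_psd_re_nonneg hB hQ
  rw [Matrix.mul_sub, Matrix.trace_sub, Complex.sub_re] at h1 h2
  have hsplit : phi (A + B) t = ((A * (A + B + (t:ℂ)•1)⁻¹).trace).re
      + ((B * (A + B + (t:ℂ)•1)⁻¹).trace).re := by
    rw [phi, Matrix.add_mul, Matrix.trace_add, Complex.add_re]
  rw [hsplit, phi, phi]
  linarith

lemma trInv_convex {r' : ℕ} {A : Fin r' → Matrix (Fin d) (Fin d) ℂ}
    (hA : ∀ i, (A i).PosSemidef) {γ : Fin r' → ℝ} (hγ : ∀ i, 0 ≤ γ i) (hγ1 : ∑ i, γ i = 1)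
    {t : ℝ} (ht : 0 < t) :
    trInv (∑ i, (γ i:ℂ) • A i) t ≤ ∑ i, γ i * trInv (A i) t := by
  have hshift : (∑ i, (γ i:ℂ) • A i) + (t:ℂ)•1 = ∑ i, (γ i:ℂ) • (A i + (t:ℂ)•1) := by
    have h1 : ∑ i, (γ i:ℂ) • (A i + (t:ℂ)•1)
        = ∑ i, ((γ i:ℂ) • A i + (γ i:ℂ) • ((t:ℂ)•(1 : Matrix (Fin d) (Fin d) ℂ))) :=
      Finset.sum_congr rfl (fun i _ => smul_add _ _ _)
    rw [h1, Finset.sum_add_distrib, ← Finset.sum_smul]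
    congr 1
    have h2 : (∑ i, (γ i:ℂ)) = 1 := by rw [← Complex.ofReal_sum, hγ1, Complex.ofReal_one]
    rw [h2, one_smul]
  have hAshift : ∀ i, (A i + (t:ℂ)•1).PosDef := fun i => shift_posDef (hA i) ht
  have hCpsd : (∑ i, (γ i:ℂ) • A i).PosSemidef :=
    posSemidef_sum _ _ (fun i _ => posSemidef_real_smul (hA i) (hγ i))
  have hCd : (∑ i, (γ i:ℂ) • (A i + (t:ℂ)•1)).PosDef := by
    rw [← hshift]; exact shift_posDef hCpsd ht
  have hform := fun v => inv_form_convex hAshift hγ hγ1 hCd v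
  rw [trInv, hshift, trace_re_eq_sum_form]
  calc ∑ j, (dotProduct (star (Pi.single j 1))
        ((∑ i, (γ i:ℂ) • (A i + (t:ℂ)•1))⁻¹ *ᵥ Pi.single j 1)).re
      ≤ ∑ j, ∑ i, γ i * (dotProduct (star (Pi.single j 1))
          ((A i + (t:ℂ)•1)⁻¹ *ᵥ Pi.single j 1)).re :=
        by
          apply Finset.sum_le_sum
          intro j _
          exact hform _
    _ = ∑ i, γ i * trInv (A i) t := by
        rw [Finset.sum_comm]
        apply Finset.sum_congr rfl
        intro i _
        rw [trInv, trace_re_eq_sum_form, Finset.mul_sum]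

lemma phi_concave {r' : ℕ} {A : Fin r' → Matrix (Fin d) (Fin d) ℂ}
    (hA : ∀ i, (A i).PosSemidef) {γ : Fin r' → ℝ} (hγ : ∀ i, 0 ≤ γ i) (hγ1 : ∑ i, γ i = 1)
    {t : ℝ} (ht : 0 < t) :
    ∑ i, γ i * phi (A i) t ≤ phi (∑ i, (γ i:ℂ) • A i) t := by
  have hCpsd : (∑ i, (γ i:ℂ) • A i).PosSemidef :=
    posSemidef_sum _ _ (fun i _ => posSemidef_real_smul (hA i) (hγ i))
  have h1 : ∀ i : Fin r', γ i * phi (A i) t = γ i * d - t * (γ i * trInv (A i) t) := by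
    intro i
    rw [phi_card (hA i) ht]
    ring
  rw [Finset.sum_congr rfl (fun i _ => h1 i), Finset.sum_sub_distrib, ← Finset.sum_mul, hγ1,
    one_mul, ← Finset.mul_sum, phi_card hCpsd ht]
  have h2 := trInv_convex hA hγ hγ1 ht
  nlinarith

lemma phi_smul {A : Matrix (Fin d) (Fin d) ℂ} (hA : A.PosSemidef) {γ t : ℝ}
    (hγ : 0 < γ) (ht : 0 < t) : phi ((γ:ℂ) • A) t = phi A (t / γ) := by
  have hkey : (γ:ℂ) • A + (t:ℂ) • 1 = (γ:ℂ) • (A + ((t/γ : ℝ):ℂ) • (1 : Matrix (Fin d) (Fin d) ℂ)) := by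
    rw [smul_add, smul_smul]
    congr 2
    push_cast
    field_simp
  have hMd := shift_posDef hA (div_pos ht hγ)
  have hdet : IsUnit (A + ((t/γ:ℝ):ℂ)•(1 : Matrix (Fin d) (Fin d) ℂ)).det := by
    rw [isUnit_iff_ne_zero]; exact_mod_cast hMd.det_pos.ne'
  have hγc : (γ:ℂ) ≠ 0 := by exact_mod_cast hγ.ne'
  have hinst : Invertible (γ:ℂ) := invertibleOfNonzero hγc
  have hinv : ((γ:ℂ) • (A + ((t/γ:ℝ):ℂ)•(1 : Matrix (Fin d) (Fin d) ℂ)))⁻¹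
      = (γ:ℂ)⁻¹ • (A + ((t/γ:ℝ):ℂ)•(1 : Matrix (Fin d) (Fin d) ℂ))⁻¹ := by
    rw [Matrix.inv_smul (A := A + ((t/γ:ℝ):ℂ)•(1 : Matrix (Fin d) (Fin d) ℂ)) ((γ:ℂ)) hdet, invOf_eq_inv]
  rw [phi, hkey, hinv, Matrix.smul_mul, Matrix.mul_smul, smul_smul, mul_inv_cancel₀ hγc, one_smul]
  rfl

/-! ### tau and the bridge -/

noncomputable def tau {d : ℕ} (α : ℝ) (A : Matrix (Fin d) (Fin d) ℂ) : ℝ :=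
  ((mPow A α).trace).re

lemma tau_eq {A : Matrix (Fin d) (Fin d) ℂ} (hA : A.PosSemidef) {α : ℝ} (hα : α ≠ 0) :
    tau α A = ∑ j, hA.1.eigenvalues j ^ α := by
  rw [tau, mPow, dif_pos hA.1, conj_unitary_trace, ← Complex.ofReal_sum, Complex.ofReal_re]
  apply Finset.sum_congr rfl
  intro j _
  by_cases h : hA.1.eigenvalues j = 0
  · rw [if_pos h, h, Real.zero_rpow hα]
  · rw [if_neg h]

lemma integrand_eq {A : Matrix (Fin d) (Fin d) ℂ} (hA : A.PosSemidef) {α t : ℝ} (ht : t ∈ Ioi (0:ℝ)) :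
    t ^ (α - 1) * phi A t = ∑ j, ker α (hA.1.eigenvalues j) t := by
  rw [phi_eq hA ht, Finset.mul_sum]
  apply Finset.sum_congr rfl
  intro j _
  rw [ker, div_eq_mul_inv]

lemma integrableOn_integrand {A : Matrix (Fin d) (Fin d) ℂ} (hA : A.PosSemidef) {α : ℝ}
    (hα : α ∈ Ioo (0:ℝ) 1) :
    IntegrableOn (fun t => t ^ (α-1) * phi A t) (Ioi (0:ℝ)) := by
  have hi : IntegrableOn (fun t => ∑ j, ker α (hA.1.eigenvalues j) t) (Ioi (0:ℝ)) := by
    apply MeasureTheory.integrable_finset_sum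
    intro j _
    exact integrableOn_ker hα (hA.eigenvalues_nonneg j)
  exact hi.congr_fun (fun t ht => (integrand_eq hA ht).symm) measurableSet_Ioi

lemma integral_integrand {A : Matrix (Fin d) (Fin d) ℂ} (hA : A.PosSemidef) {α : ℝ}
    (hα : α ∈ Ioo (0:ℝ) 1) :
    ∫ t in Ioi (0:ℝ), t ^ (α-1) * phi A t = cc α * tau α A := by
  have h1 : ∫ t in Ioi (0:ℝ), t ^ (α-1) * phi A t
      = ∫ t in Ioi (0:ℝ), ∑ j, ker α (hA.1.eigenvalues j) t :=
    setIntegral_congr_fun measurableSet_Ioi (fun t ht => integrand_eq hA ht)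
  rw [h1, MeasureTheory.integral_finset_sum _
    (fun j _ => integrableOn_ker hα (hA.eigenvalues_nonneg j))]
  rw [Finset.sum_congr rfl (fun j (_ : j ∈ Finset.univ) =>
    integral_ker hα (hA.eigenvalues_nonneg j)), ← Finset.mul_sum, tau_eq hA hα.1.ne']

lemma tau_zero {d : ℕ} {α : ℝ} (hα : α ∈ Ioo (0:ℝ) 1) :
    tau α (0 : Matrix (Fin d) (Fin d) ℂ) = 0 := by
  have h := integral_integrand (Matrix.PosSemidef.zero (n := Fin d) (R := ℂ)) hα
  have hphi : ∀ t : ℝ, phi (0 : Matrix (Fin d) (Fin d) ℂ) t = 0 := by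
    intro t
    rw [phi, Matrix.zero_mul, Matrix.trace_zero]
    simp
  rw [show (fun t : ℝ => t ^ (α-1) * phi (0 : Matrix (Fin d) (Fin d) ℂ) t)
    = fun _ => (0:ℝ) from funext (fun t => by rw [hphi]; ring)] at h
  simp only [MeasureTheory.integral_zero] at h
  have := cc_pos hα
  nlinarith [h.symm]

lemma tau_smul {A : Matrix (Fin d) (Fin d) ℂ} (hA : A.PosSemidef) {α γ : ℝ}
    (hα : α ∈ Ioo (0:ℝ) 1) (hγ : 0 ≤ γ) :
    tau α ((γ:ℂ) • A) = γ ^ α * tau α A := by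
  rcases eq_or_lt_of_le hγ with h | hγp
  · rw [← h]
    rw [show ((0:ℝ):ℂ) • A = 0 by simp, tau_zero hα, Real.zero_rpow hα.1.ne']
    ring
  · have hsmul := posSemidef_real_smul hA hγp.le
    have h1 := integral_integrand hsmul hα
    have hpt : ∀ t ∈ Ioi (0:ℝ), t ^ (α-1) * phi ((γ:ℂ) • A) t
        = ∑ j, ker α (γ * hA.1.eigenvalues j) t := by
      intro t ht
      have ht' : (0:ℝ) < t := ht
      rw [phi_smul hA hγp ht', phi_eq hA (div_pos ht' hγp), Finset.mul_sum]
      apply Finset.sum_congr rfl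
      intro j _
      rw [ker]
      have hl := hA.eigenvalues_nonneg j
      have hne1 : hA.1.eigenvalues j + t / γ ≠ 0 := by positivity
      have hne2 : γ * hA.1.eigenvalues j + t ≠ 0 := by positivity
      have hγ0 : γ ≠ 0 := hγp.ne'
      have h2 : hA.1.eigenvalues j * (hA.1.eigenvalues j + t / γ)⁻¹
          = γ * hA.1.eigenvalues j / (γ * hA.1.eigenvalues j + t) := by
        field_simp
      rw [h2]
      
    have h3 : ∫ t in Ioi (0:ℝ), t ^ (α-1) * phi ((γ:ℂ) • A) t
        = ∑ j, ∫ t in Ioi (0:ℝ), ker α (γ * hA.1.eigenvalues j) t := by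
      rw [setIntegral_congr_fun measurableSet_Ioi hpt]
      exact MeasureTheory.integral_finset_sum _
        (fun j _ => integrableOn_ker hα (mul_nonneg hγp.le (hA.eigenvalues_nonneg j)))
    have h4 : ∑ j, ∫ t in Ioi (0:ℝ), ker α (γ * hA.1.eigenvalues j) t
        = cc α * (γ ^ α * tau α A) := by
      rw [Finset.sum_congr rfl (fun j (_ : j ∈ Finset.univ) =>
        integral_ker hα (mul_nonneg hγp.le (hA.eigenvalues_nonneg j)))]
      rw [Finset.sum_congr rfl (fun j (_ : j ∈ Finset.univ) => by
        rw [Real.mul_rpow hγp.le (hA.eigenvalues_nonneg j)])]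
      rw [tau_eq hA hα.1.ne', Finset.mul_sum, Finset.mul_sum]
    have hcc := cc_pos hα
    have h5 : cc α * tau α ((γ:ℂ) • A) = cc α * (γ ^ α * tau α A) := by
      rw [← h1, h3, h4]
    exact mul_left_cancel₀ hcc.ne' h5

lemma tau_add_le {A B : Matrix (Fin d) (Fin d) ℂ} (hA : A.PosSemidef) (hB : B.PosSemidef)
    {α : ℝ} (hα : α ∈ Ioo (0:ℝ) 1) :
    tau α (A + B) ≤ tau α A + tau α B := by
  have hAB := hA.add hB
  have hle : ∫ t in Ioi (0:ℝ), t ^ (α-1) * phi (A + B) t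
      ≤ ∫ t in Ioi (0:ℝ), (t ^ (α-1) * phi A t + t ^ (α-1) * phi B t) := by
    apply setIntegral_mono_on (integrableOn_integrand hAB hα)
      ((integrableOn_integrand hA hα).add (integrableOn_integrand hB hα)) measurableSet_Ioi
    intro t ht
    have ht' : (0:ℝ) < t := ht
    have h1 := phi_subadd hA hB ht'
    have h2 : (0:ℝ) ≤ t ^ (α-1) := Real.rpow_nonneg ht'.le _
    simp only [Pi.add_apply]
    nlinarith
  rw [integral_integrand hAB hα,
    MeasureTheory.integral_add (integrableOn_integrand hA hα) (integrableOn_integrand hB hα),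
    integral_integrand hA hα, integral_integrand hB hα] at hle
  have hcc := cc_pos hα
  nlinarith

lemma tau_concave {r' : ℕ} {A : Fin r' → Matrix (Fin d) (Fin d) ℂ}
    (hA : ∀ i, (A i).PosSemidef) {γ : Fin r' → ℝ} (hγ : ∀ i, 0 ≤ γ i) (hγ1 : ∑ i, γ i = 1)
    {α : ℝ} (hα : α ∈ Ioo (0:ℝ) 1) :
    ∑ i, γ i * tau α (A i) ≤ tau α (∑ i, (γ i:ℂ) • A i) := by
  have hCpsd : (∑ i, (γ i:ℂ) • A i).PosSemidef :=
    posSemidef_sum _ _ (fun i _ => posSemidef_real_smul (hA i) (hγ i))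
  have hle : ∫ t in Ioi (0:ℝ), (∑ i, γ i * (t ^ (α-1) * phi (A i) t))
      ≤ ∫ t in Ioi (0:ℝ), t ^ (α-1) * phi (∑ i, (γ i:ℂ) • A i) t := by
    apply setIntegral_mono_on
      (MeasureTheory.integrable_finset_sum _
        (fun i _ => ((integrableOn_integrand (hA i) hα)).const_mul (γ i)))
      (integrableOn_integrand hCpsd hα) measurableSet_Ioi
    intro t ht
    have ht' : (0:ℝ) < t := ht
    have h1 := phi_concave hA hγ hγ1 ht'
    have h2 : (0:ℝ) ≤ t ^ (α-1) := Real.rpow_nonneg ht'.le _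
    calc ∑ i, γ i * (t ^ (α-1) * phi (A i) t) = t ^ (α-1) * ∑ i, γ i * phi (A i) t := by
          rw [Finset.mul_sum]
          exact Finset.sum_congr rfl (fun i _ => by ring)
      _ ≤ t ^ (α-1) * phi (∑ i, (γ i:ℂ) • A i) t := by nlinarith
  rw [MeasureTheory.integral_finset_sum _
    (fun i _ => ((integrableOn_integrand (hA i) hα)).const_mul (γ i))] at hle
  simp only [MeasureTheory.integral_const_mul] at hle
  rw [integral_integrand hCpsd hα] at hle
  rw [Finset.sum_congr rfl (fun i (_ : i ∈ Finset.univ) => by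
    rw [integral_integrand (hA i) hα])] at hle
  have hcc := cc_pos hα
  have h6 : ∑ i, γ i * (cc α * tau α (A i)) = cc α * ∑ i, γ i * tau α (A i) := by
    rw [Finset.mul_sum]
    exact Finset.sum_congr rfl (fun i _ => by ring)
  rw [h6] at hle
  exact le_of_mul_le_mul_left hle hcc

lemma tau_sum_le {ι : Type*} (s : Finset ι) (B : ι → Matrix (Fin d) (Fin d) ℂ)
    (hB : ∀ i ∈ s, (B i).PosSemidef) {α : ℝ} (hα : α ∈ Ioo (0:ℝ) 1) :
    tau α (∑ i ∈ s, B i) ≤ ∑ i ∈ s, tau α (B i) := by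
  classical
  induction s using Finset.induction with
  | empty => simp [tau_zero hα]
  | @insert a s ha ih =>
    rw [Finset.sum_insert ha, Finset.sum_insert ha]
    have h1 : (∑ i ∈ s, B i).PosSemidef :=
      posSemidef_sum _ _ (fun i hi => hB i (Finset.mem_insert_of_mem hi))
    have h2 := tau_add_le (hB a (Finset.mem_insert_self a s)) h1 hα
    have h3 := ih (fun i hi => hB i (Finset.mem_insert_of_mem hi))
    linarith

lemma mPow_isHermitian {A : Matrix (Fin d) (Fin d) ℂ} (hA : A.IsHermitian) (β : ℝ) :
    (mPow A β).IsHermitian := by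
  rw [mPow, dif_pos hA, Matrix.IsHermitian]
  simp only [conjTranspose_mul, ← Matrix.star_eq_conjTranspose, star_star,
    Matrix.star_eq_conjTranspose, Matrix.diagonal_conjTranspose]
  have h : star (fun i => (((if hA.eigenvalues i = 0 then 0 else hA.eigenvalues i ^ β) : ℝ) : ℂ))
      = fun i => (((if hA.eigenvalues i = 0 then 0 else hA.eigenvalues i ^ β) : ℝ) : ℂ) := by
    funext i
    simp [Complex.star_def, Complex.conj_ofReal]
  rw [h, conjTranspose_conjTranspose, Matrix.mul_assoc]

end QnewAux

theorem Qnew_concavity_complement {d r : ℕ} (hd : 1 ≤ d) (hr : 1 ≤ r)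
    (ρ : Fin r → Matrix (Fin d) (Fin d) ℂ)
    (hρ : ∀ i, (ρ i).PosSemidef) (hρ1 : ∀ i, (ρ i).trace = 1)
    (σ : Matrix (Fin d) (Fin d) ℂ) (hσ : σ.PosSemidef) (hσ0 : σ ≠ 0)
    (γ : Fin r → ℝ) (hγ : ∀ i, 0 ≤ γ i) (hγ1 : ∑ i, γ i = 1)
    {α : ℝ} (hα : α ∈ Set.Ioo (0 : ℝ) 1) :
    ∑ i, γ i * Qnew (ρ i) σ α ≤ Qnew (∑ i, (γ i : ℂ) • ρ i) σ α ∧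
    Qnew (∑ i, (γ i : ℂ) • ρ i) σ α ≤ ∑ i, γ i ^ α * Qnew (ρ i) σ α := by
  open QnewAux in
  have hS : (mPow σ ((1 - α)/(2*α))).IsHermitian := QnewAux.mPow_isHermitian hσ.1 _
  set S := mPow σ ((1 - α)/(2*α)) with hSdef
  have hAi : ∀ i, (S * ρ i * S).PosSemidef := by
    intro i
    have h := (hρ i).conjTranspose_mul_mul_same (B := S)
    rwa [hS.eq] at h
  have hmix : S * (∑ i, (γ i:ℂ) • ρ i) * S = ∑ i, (γ i:ℂ) • (S * ρ i * S) := by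
    rw [Matrix.mul_sum, Matrix.sum_mul]
    apply Finset.sum_congr rfl
    intro i _
    rw [Matrix.mul_smul, Matrix.smul_mul]
  have hQ : ∀ i, Qnew (ρ i) σ α = QnewAux.tau α (S * ρ i * S) := fun i => rfl
  have hQmix : Qnew (∑ i, (γ i:ℂ) • ρ i) σ α
      = QnewAux.tau α (∑ i, (γ i:ℂ) • (S * ρ i * S)) := by
    show QnewAux.tau α (S * (∑ i, (γ i:ℂ) • ρ i) * S) = _
    rw [hmix]
  constructor
  · rw [hQmix]
    calc ∑ i, γ i * Qnew (ρ i) σ α = ∑ i, γ i * QnewAux.tau α (S * ρ i * S) :=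
          Finset.sum_congr rfl (fun i _ => by rw [hQ i])
      _ ≤ QnewAux.tau α (∑ i, (γ i:ℂ) • (S * ρ i * S)) :=
          QnewAux.tau_concave hAi hγ hγ1 hα
  · rw [hQmix]
    have h1 : QnewAux.tau α (∑ i, (γ i:ℂ) • (S * ρ i * S))
        ≤ ∑ i, QnewAux.tau α ((γ i:ℂ) • (S * ρ i * S)) :=
      QnewAux.tau_sum_le Finset.univ _
        (fun i _ => QnewAux.posSemidef_real_smul (hAi i) (hγ i)) hα
    have h2 : ∑ i, QnewAux.tau α ((γ i:ℂ) • (S * ρ i * S))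
        = ∑ i, γ i ^ α * Qnew (ρ i) σ α :=
      Finset.sum_congr rfl (fun i _ => by
        rw [QnewAux.tau_smul (hAi i) hα (hγ i), hQ i])
    linarith
end
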